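/- arXiv:math/0012243 — 3 statements merged into one kernel-verified Lean document; each statement's English description precedes it below -/
import Mathlib

section
/- Let $J^l_0(\mathbb{C}^k,\mathbb{C}^r)$ denote the space of $l$-jets at the origin, with coordinates $\Lambda = (\Lambda_\alpha)_{|\alpha| \le l}$, $\Lambda_\alpha \in \mathbb{C}^r$, split as $\Lambda = (\Lambda_0, \hat\Lambda)$ where $\hat\Lambda = (\Lambda_\alpha)_{1 \le |\alpha| \le l}$. If $u \in \mathbb{C}[[\Lambda_0]][\hat\Lambda]$ (a polynomial in $\hat\Lambda$ with formal power series coefficients in $\Lambda_0$) satisfies $u(j^l_x F) = 0$ in $\mathbb{C}[[x]]$ for every formal power series map $F : (\mathbb{C}^k,0) \to (\mathbb{C}^r,0)$, where $j^l_x F = (\partial^\nu F(x))_{|\nu| \le l}$, then $u = 0$. -/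
open MvPowerSeries

noncomputable def fsubst {σ τ : Type*} [Fintype σ] [DecidableEq σ]
    (a : σ → MvPowerSeries τ ℂ) (f : MvPowerSeries σ ℂ) : MvPowerSeries τ ℂ :=
  fun e => MvPowerSeries.coeff e
    (∑ m ∈ Finset.Iic (Finsupp.equivFunOnFinite.symm fun _ => (e.sum fun _ x => x)),
      MvPowerSeries.coeff m f • ∏ s : σ, (a s) ^ m s)

noncomputable def iterD {σ : Type*} (ν : σ →₀ ℕ) (f : MvPowerSeries σ ℂ) :
    MvPowerSeries σ ℂ :=
  fun m => ((ν.prod fun s e => Nat.descFactorial (m s + e) e : ℕ) : ℂ) *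
    MvPowerSeries.coeff (m + ν) f


namespace JetAux

/-- total weight of a multi-index -/
def wt {σ : Type*} (m : σ →₀ ℕ) : ℕ := m.sum fun _ e => e

lemma wt_add {σ : Type*} (a b : σ →₀ ℕ) : wt (a + b) = wt a + wt b :=
  Finsupp.sum_add_index' (fun _ => rfl) (fun _ _ _ => rfl)

lemma le_wt {σ : Type*} (s : σ) (m : σ →₀ ℕ) : m s ≤ wt m := by
  by_cases hs : s ∈ m.support
  · exact Finset.single_le_sum (f := fun j => m j) (fun _ _ => Nat.zero_le _) hs
  · simp [Finsupp.notMem_support_iff.mp hs]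

lemma wt_eq_zero {σ : Type*} {m : σ →₀ ℕ} (h : wt m = 0) : m = 0 := by
  ext s
  exact Nat.le_zero.mp (h ▸ le_wt s m)

lemma wt_zero {σ : Type*} : wt (0 : σ →₀ ℕ) = 0 := rfl

lemma wt_tsub {σ : Type*} {a b : σ →₀ ℕ} (h : b ≤ a) : wt (a - b) = wt a - wt b := by
  have : a - b + b = a := tsub_add_cancel_of_le h
  have h2 : wt (a - b) + wt b = wt a := by rw [← wt_add, this]
  omega

lemma wt_fintype {σ : Type*} [Fintype σ] (m : σ →₀ ℕ) : wt m = ∑ s : σ, m s :=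
  Finsupp.sum_fintype _ _ (fun _ => rfl)

/-- `f` has order at least `n` : all coefficients of weight `< n` vanish. -/
def ordGE {σ : Type*} (n : ℕ) (f : MvPowerSeries σ ℂ) : Prop :=
  ∀ E : σ →₀ ℕ, wt E < n → MvPowerSeries.coeff E f = 0

variable {σ : Type*}

lemma ordGE_mono {m n : ℕ} {f : MvPowerSeries σ ℂ} (h : ordGE n f) (hmn : m ≤ n) :
    ordGE m f := fun E hE => h E (lt_of_lt_of_le hE hmn)

lemma ordGE_zero (n : ℕ) : ordGE n (0 : MvPowerSeries σ ℂ) := fun _ _ => map_zero _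

lemma ordGE_any (f : MvPowerSeries σ ℂ) : ordGE 0 f := fun _ h => absurd h (Nat.not_lt_zero _)

lemma ordGE_add {n : ℕ} {f g : MvPowerSeries σ ℂ} (hf : ordGE n f) (hg : ordGE n g) :
    ordGE n (f + g) := fun E hE => by rw [map_add, hf E hE, hg E hE, add_zero]

lemma ordGE_neg {n : ℕ} {f : MvPowerSeries σ ℂ} (hf : ordGE n f) : ordGE n (-f) :=
  fun E hE => by rw [map_neg, hf E hE, neg_zero]

lemma ordGE_sub {n : ℕ} {f g : MvPowerSeries σ ℂ} (hf : ordGE n f) (hg : ordGE n g) :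
    ordGE n (f - g) := by
  rw [sub_eq_add_neg]; exact ordGE_add hf (ordGE_neg hg)

lemma ordGE_smul {n : ℕ} {c : ℂ} {f : MvPowerSeries σ ℂ} (hf : ordGE n f) :
    ordGE n (c • f) := fun E hE => by rw [map_smul, hf E hE, smul_zero]

lemma ordGE_nsmul {n : ℕ} {c : ℕ} {f : MvPowerSeries σ ℂ} (hf : ordGE n f) :
    ordGE n (c • f) := fun E hE => by
  rw [map_nsmul, hf E hE, smul_zero]

lemma ordGE_sum {n : ℕ} {ι : Type*} {s : Finset ι} {f : ι → MvPowerSeries σ ℂ}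
    (h : ∀ i ∈ s, ordGE n (f i)) : ordGE n (∑ i ∈ s, f i) := fun E hE => by
  rw [map_sum]
  exact Finset.sum_eq_zero fun i hi => h i hi E hE

lemma ordGE_mul {m n : ℕ} {f g : MvPowerSeries σ ℂ} (hf : ordGE m f) (hg : ordGE n g) :
    ordGE (m + n) (f * g) := by
  classical
  intro E hE
  rw [MvPowerSeries.coeff_mul]
  apply Finset.sum_eq_zero
  rintro ⟨p, q⟩ hpq
  replace hpq : p + q = E := Finset.HasAntidiagonal.mem_antidiagonal.mp hpq
  have hw : wt p + wt q = wt E := by rw [← wt_add, hpq]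
  rcases lt_or_ge (wt p) m with h1 | h1
  · rw [hf p h1, zero_mul]
  · have : wt q < n := by omega
    rw [hg q this, mul_zero]

lemma ordGE_mul_left {n : ℕ} (f : MvPowerSeries σ ℂ) {g : MvPowerSeries σ ℂ}
    (hg : ordGE n g) : ordGE n (f * g) := by
  have := ordGE_mul (ordGE_any f) hg
  simpa using this

lemma ordGE_mul_right {n : ℕ} {f : MvPowerSeries σ ℂ} (hf : ordGE n f)
    (g : MvPowerSeries σ ℂ) : ordGE n (f * g) := by
  have := ordGE_mul hf (ordGE_any g)
  simpa using this

lemma ordGE_prod {ι : Type*} {s : Finset ι} {n : ι → ℕ} {f : ι → MvPowerSeries σ ℂ}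
    (h : ∀ i ∈ s, ordGE (n i) (f i)) : ordGE (∑ i ∈ s, n i) (∏ i ∈ s, f i) := by
  classical
  induction s using Finset.induction_on with
  | empty => intro E hE; simp at hE
  | @insert a s hs ih =>
      rw [Finset.sum_insert hs, Finset.prod_insert hs]
      exact ordGE_mul (h a (Finset.mem_insert_self _ _))
        (ih fun i hi => h i (Finset.mem_insert_of_mem hi))

lemma ordGE_pow {c : ℕ} {f : MvPowerSeries σ ℂ} (hf : ordGE c f) (m : ℕ) :
    ordGE (m * c) (f ^ m) := by
  have := ordGE_prod (s := Finset.range m) (n := fun _ => c) (f := fun _ => f)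
    (fun i _ => hf)
  simpa [Finset.prod_const, Finset.sum_const, Finset.card_range, mul_comm] using this

lemma ordGE_one_of_constantCoeff {f : MvPowerSeries σ ℂ}
    (h : MvPowerSeries.constantCoeff f = 0) : ordGE 1 f := by
  intro E hE
  have : E = 0 := wt_eq_zero (Nat.lt_one_iff.mp hE)
  rw [this]
  rw [MvPowerSeries.coeff_zero_eq_constantCoeff]
  exact h

lemma ordGE_monomial (D : σ →₀ ℕ) (c : ℂ) :
    ordGE (wt D) (MvPowerSeries.monomial D c) := by
  classical
  intro E hE
  rw [MvPowerSeries.coeff_monomial]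
  split
  · next h => exact absurd (h ▸ hE) (lt_irrefl _)
  · rfl

lemma prodPow_ordGE [Fintype σ] {τ : Type*} {a : σ → MvPowerSeries τ ℂ}
    (ha : ∀ s, MvPowerSeries.constantCoeff (a s) = 0) (m : σ →₀ ℕ) :
    ordGE (wt m) (∏ s : σ, a s ^ m s) := by
  rw [wt_fintype]
  exact ordGE_prod fun s _ => by
    simpa using ordGE_pow (ordGE_one_of_constantCoeff (ha s)) (m s)

/- ### iterD lemmas -/

lemma coeff_iterD (ν : σ →₀ ℕ) (f : MvPowerSeries σ ℂ) (E : σ →₀ ℕ) :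
    MvPowerSeries.coeff E (iterD ν f) =
      ((ν.prod fun s e => Nat.descFactorial (E s + e) e : ℕ) : ℂ) *
        MvPowerSeries.coeff (E + ν) f := rfl

lemma iterD_zero (ν : σ →₀ ℕ) : iterD ν (0 : MvPowerSeries σ ℂ) = 0 := by
  apply MvPowerSeries.ext; intro E
  rw [coeff_iterD, map_zero, mul_zero, map_zero]

lemma iterD_add (ν : σ →₀ ℕ) (f g : MvPowerSeries σ ℂ) :
    iterD ν (f + g) = iterD ν f + iterD ν g := by
  apply MvPowerSeries.ext; intro E
  rw [map_add, coeff_iterD, coeff_iterD, coeff_iterD, map_add, mul_add]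

lemma ordGE_iterD {n : ℕ} {f : MvPowerSeries σ ℂ} (hf : ordGE n f) (ν : σ →₀ ℕ) :
    ordGE (n - wt ν) (iterD ν f) := by
  intro E hE
  rw [coeff_iterD, hf (E + ν) (by rw [wt_add]; omega), mul_zero]

lemma iterD_monomial_one [Fintype σ] (ν D : σ →₀ ℕ) :
    iterD ν (MvPowerSeries.monomial D 1) =
      ((∏ s : σ, Nat.descFactorial (D s) (ν s) : ℕ) : ℂ) •
        MvPowerSeries.monomial (D - ν) 1 := by
  classical
  apply MvPowerSeries.ext; intro E
  rw [coeff_iterD, map_smul, MvPowerSeries.coeff_monomial, MvPowerSeries.coeff_monomial]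
  have hprod : (ν.prod fun s e => Nat.descFactorial (E s + e) e) =
      ∏ s : σ, Nat.descFactorial (E s + ν s) (ν s) :=
    Finsupp.prod_fintype _ _ (fun _ => rfl)
  by_cases hν : ν ≤ D
  · by_cases hE : E = D - ν
    · have hED : E + ν = D := by rw [hE]; exact tsub_add_cancel_of_le hν
      rw [if_pos hED, if_pos hE, hprod]
      have : ∀ s, E s + ν s = D s := fun s => by
        have := DFunLike.congr_fun hED s
        simpa using this
      simp only [this]
      simp [smul_eq_mul]
    · have hED : ¬ (E + ν = D) := fun h => hE (by rw [← h]; simp)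
      rw [if_neg hED, if_neg hE, mul_zero, smul_zero]
  · have hED : ¬ (E + ν = D) := fun h => hν (h ▸ le_add_self)
    rw [if_neg hED, mul_zero]
    have : ∃ s : σ, D s < ν s := by
      by_contra hc
      push_neg at hc
      exact hν fun s => hc s
    obtain ⟨s, hs⟩ := this
    have : (∏ s : σ, Nat.descFactorial (D s) (ν s)) = 0 :=
      Finset.prod_eq_zero (Finset.mem_univ s) (Nat.descFactorial_eq_zero_iff_lt.mpr hs)
    rw [this]
    simp

end JetAux

namespace JetAux

variable {σ τ : Type*} [Fintype σ] [DecidableEq σ]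

lemma coeff_fsubst (a : σ → MvPowerSeries τ ℂ) (f : MvPowerSeries σ ℂ) (E : τ →₀ ℕ) :
    MvPowerSeries.coeff E (fsubst a f) =
      ∑ m ∈ Finset.Iic (Finsupp.equivFunOnFinite.symm fun _ => wt E),
        MvPowerSeries.coeff m f * MvPowerSeries.coeff E (∏ s : σ, a s ^ m s) := by
  show MvPowerSeries.coeff E (∑ m ∈ _, _) = _
  rw [map_sum]
  rfl

lemma not_mem_Iic_const {t : ℕ} {m : σ →₀ ℕ}
    (h : m ∉ Finset.Iic (Finsupp.equivFunOnFinite.symm fun _ => t)) : t < wt m := by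
  rw [Finset.mem_Iic, Finsupp.le_def] at h
  push_neg at h
  obtain ⟨s, hs⟩ := h
  simp only [Finsupp.coe_equivFunOnFinite_symm] at hs
  exact lt_of_lt_of_le hs (le_wt s m)

lemma coeff_fsubst_superset {a : σ → MvPowerSeries τ ℂ}
    (ha : ∀ s, MvPowerSeries.constantCoeff (a s) = 0)
    (f : MvPowerSeries σ ℂ) {E : τ →₀ ℕ} {T : Finset (σ →₀ ℕ)}
    (hT : Finset.Iic (Finsupp.equivFunOnFinite.symm fun _ => wt E) ⊆ T) :
    MvPowerSeries.coeff E (fsubst a f) =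
      ∑ m ∈ T, MvPowerSeries.coeff m f * MvPowerSeries.coeff E (∏ s : σ, a s ^ m s) := by
  rw [coeff_fsubst]
  apply Finset.sum_subset hT
  intro m _ hm
  rw [prodPow_ordGE ha m E (not_mem_Iic_const hm), mul_zero]

lemma fsubst_zero (a : σ → MvPowerSeries τ ℂ) : fsubst a 0 = 0 := by
  apply MvPowerSeries.ext; intro E
  rw [coeff_fsubst, map_zero]
  exact Finset.sum_eq_zero fun m _ => by rw [map_zero, zero_mul]

lemma fsubst_add (a : σ → MvPowerSeries τ ℂ) (f g : MvPowerSeries σ ℂ) :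
    fsubst a (f + g) = fsubst a f + fsubst a g := by
  apply MvPowerSeries.ext; intro E
  rw [map_add, coeff_fsubst, coeff_fsubst, coeff_fsubst, ← Finset.sum_add_distrib]
  exact Finset.sum_congr rfl fun m _ => by rw [map_add, add_mul]

lemma fsubst_approx {a : σ → MvPowerSeries τ ℂ}
    (ha : ∀ s, MvPowerSeries.constantCoeff (a s) = 0)
    (f : MvPowerSeries σ ℂ) (t : ℕ) :
    ordGE t (fsubst a f -
      ∑ m ∈ Finset.Iic (Finsupp.equivFunOnFinite.symm fun _ => t),
        MvPowerSeries.coeff m f • ∏ s : σ, a s ^ m s) := by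
  intro E hE
  rw [map_sub, sub_eq_zero, map_sum]
  rw [coeff_fsubst_superset ha f (T := Finset.Iic (Finsupp.equivFunOnFinite.symm fun _ => t))
    (Finset.Iic_subset_Iic.mpr (by
      rw [Finsupp.le_def]
      intro s
      simp only [Finsupp.coe_equivFunOnFinite_symm]
      omega))]
  rfl

lemma fsubst_zero_family (f : MvPowerSeries σ ℂ) :
    fsubst (fun _ => (0 : MvPowerSeries τ ℂ)) f =
      MvPowerSeries.C (MvPowerSeries.constantCoeff f) := by
  classical
  apply MvPowerSeries.ext; intro E
  rw [coeff_fsubst, MvPowerSeries.coeff_C]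
  have h0 : (0 : σ →₀ ℕ) ∈ Finset.Iic (Finsupp.equivFunOnFinite.symm fun _ => wt E) :=
    Finset.mem_Iic.mpr zero_le
  rw [Finset.sum_eq_single_of_mem 0 h0 ?side]
  case side =>
    intro m _ hm
    have : ∃ s : σ, m s ≠ 0 := by
      by_contra hc
      push_neg at hc
      exact hm (Finsupp.ext hc)
    obtain ⟨s, hs⟩ := this
    rw [Finset.prod_eq_zero (Finset.mem_univ s) (by rw [zero_pow hs]), map_zero, mul_zero]
  · simp only [Finsupp.coe_zero, Pi.zero_apply, pow_zero, Finset.prod_const_one]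
    rw [MvPowerSeries.coeff_zero_eq_constantCoeff, MvPowerSeries.coeff_one]
    split <;> simp

end JetAux


/-- The index set of the coordinates `Λ_α`, `|α| ≤ l`, of the jet space `J^l_0(ℂ^k, ℂ)`. -/
abbrev JIdx (k l : ℕ) : Type := {ν : Fin k →₀ ℕ // (ν.sum fun _ e => e) ≤ l}

instance (k l : ℕ) : Finite (JIdx k l) := by
  have h : {ν : Fin k →₀ ℕ | (ν.sum fun _ e => e) ≤ l}.Finite := by
    apply Set.Finite.subset
      (Finset.finite_toSet (Finset.Iic (Finsupp.equivFunOnFinite.symm fun _ => l)))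
    intro ν hν
    simp only [Finset.coe_Iic, Set.mem_Iic]
    intro i
    refine le_trans ?_ hν
    by_cases hi : i ∈ ν.support
    · exact Finset.single_le_sum (f := fun j => ν j) (fun _ _ => Nat.zero_le _) hi
    · simp [Finsupp.notMem_support_iff.mp hi]
  exact h.to_subtype

noncomputable instance (k l : ℕ) : Fintype (JIdx k l) := Fintype.ofFinite _

instance (k l : ℕ) : DecidableEq (JIdx k l) := Subtype.instDecidableEq

/-- The index set of the higher-order jet coordinates `Λ̂ = (Λ_ν)_{1 ≤ |ν| ≤ l}`. -/
abbrev HatIdx (k l : ℕ) : Type :=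
  {ν : Fin k →₀ ℕ // 1 ≤ (ν.sum fun _ e => e) ∧ (ν.sum fun _ e => e) ≤ l}

instance (k l : ℕ) : Finite (HatIdx k l) :=
  Finite.of_injective (fun ν => (⟨ν.1, ν.2.2⟩ : JIdx k l))
    (fun a b h => Subtype.ext (by simpa using congrArg Subtype.val h))

noncomputable instance (k l : ℕ) : Fintype (HatIdx k l) := Fintype.ofFinite _

instance (k l : ℕ) : DecidableEq (HatIdx k l) := Subtype.instDecidableEq

/-- The ring `ℂ[[Λ₀]][Λ̂]` of polynomials in the higher-order jet coordinates with
formal power series coefficients in the zeroth-order jet coordinates. -/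
abbrev MixJet (k r l : ℕ) : Type :=
  MvPolynomial (HatIdx k l × Fin r) (MvPowerSeries (Fin r) ℂ)

/-- The value `u(j^l_x F)` of `u ∈ ℂ[[Λ₀]][Λ̂]` on the `l`-jet
`j^l_x F = (∂^ν F(x))_{|ν| ≤ l}` of a formal map `F : (ℂ^k,0) → (ℂ^r,0)`:
the zeroth-order coordinates are substituted by `F` and the hat coordinate of index
`(ν, i)` is substituted by `∂^ν F_i`. -/
noncomputable def jetEval {k r l : ℕ} (u : MixJet k r l)
    (F : Fin r → MvPowerSeries (Fin k) ℂ) : MvPowerSeries (Fin k) ℂ :=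
  ∑ m ∈ u.support,
    fsubst F (MvPolynomial.coeff m u) *
      (m.prod fun p e => (iterD (p.1.1 : Fin k →₀ ℕ) (F p.2)) ^ e)


namespace JetAux

variable {k r l : ℕ}

lemma jetEval_superset (u : MixJet k r l) (F : Fin r → MvPowerSeries (Fin k) ℂ)
    {T : Finset ((HatIdx k l × Fin r) →₀ ℕ)} (hT : u.support ⊆ T) :
    jetEval u F = ∑ m ∈ T,
      fsubst F (MvPolynomial.coeff m u) *
        (m.prod fun p e => (iterD (p.1.1 : Fin k →₀ ℕ) (F p.2)) ^ e) := by
  unfold jetEval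
  apply Finset.sum_subset hT
  intro m _ hm
  rw [MvPolynomial.notMem_support_iff.mp hm, fsubst_zero, zero_mul]

lemma jetEval_add (u v : MixJet k r l) (F : Fin r → MvPowerSeries (Fin k) ℂ) :
    jetEval (u + v) F = jetEval u F + jetEval v F := by
  classical
  set T := u.support ∪ v.support with hT
  rw [jetEval_superset (u + v) F (T := T)
      (Finset.Subset.trans MvPolynomial.support_add (Finset.Subset.refl _)),
    jetEval_superset u F (T := T) Finset.subset_union_left,
    jetEval_superset v F (T := T) Finset.subset_union_right,
    ← Finset.sum_add_distrib]
  exact Finset.sum_congr rfl fun m _ => by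
    rw [MvPolynomial.coeff_add, fsubst_add, add_mul]

lemma jetEval_C (c : MvPowerSeries (Fin r) ℂ) (F : Fin r → MvPowerSeries (Fin k) ℂ) :
    jetEval (MvPolynomial.C c : MixJet k r l) F = fsubst F c := by
  classical
  rw [jetEval_superset _ F (T := {0}) (by
    rw [show (MvPolynomial.C c : MixJet k r l) = MvPolynomial.monomial 0 c by
      rw [MvPolynomial.monomial_zero']
    ]
    exact MvPolynomial.support_monomial_subset)]
  rw [Finset.sum_singleton, Finsupp.prod_zero_index, mul_one, MvPolynomial.coeff_zero_C]

lemma jetEval_mul_X (u : MixJet k r l) (q : HatIdx k l × Fin r)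
    (F : Fin r → MvPowerSeries (Fin k) ℂ) :
    jetEval (u * MvPolynomial.X q) F = jetEval u F * iterD (q.1.1 : Fin k →₀ ℕ) (F q.2) := by
  classical
  unfold jetEval
  rw [MvPolynomial.support_mul_X, Finset.sum_map, Finset.sum_mul]
  apply Finset.sum_congr rfl
  intro m hm
  have hcoeff : MvPolynomial.coeff (addRightEmbedding (Finsupp.single q 1) m) (u * MvPolynomial.X q)
      = MvPolynomial.coeff m u := by
    show MvPolynomial.coeff (m + Finsupp.single q 1) (u * MvPolynomial.X q) = _
    exact MvPolynomial.coeff_mul_X m q u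
  rw [hcoeff]
  have hprod : ((addRightEmbedding (Finsupp.single q 1) m).prod
        fun p e => (iterD (p.1.1 : Fin k →₀ ℕ) (F p.2)) ^ e) =
      (m.prod fun p e => (iterD (p.1.1 : Fin k →₀ ℕ) (F p.2)) ^ e) *
        iterD (q.1.1 : Fin k →₀ ℕ) (F q.2) := by
    show ((m + Finsupp.single q 1).prod fun p e => (iterD (p.1.1 : Fin k →₀ ℕ) (F p.2)) ^ e) = _
    rw [Finsupp.prod_add_index' (fun _ => pow_zero _) (fun a b c => pow_add _ _ _)]
    congr 1
    simp [Finsupp.prod_single_index]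
  rw [hprod, mul_assoc]

/-- Coefficient-wise derivative in the `Λ₀` direction `i`. -/
noncomputable def D0 (i : Fin r) (u : MixJet k r l) : MixJet k r l :=
  ∑ m ∈ u.support,
    MvPolynomial.monomial m (iterD (Finsupp.single i 1) (MvPolynomial.coeff m u))

lemma coeff_D0 (i : Fin r) (u : MixJet k r l) (τ : (HatIdx k l × Fin r) →₀ ℕ) :
    MvPolynomial.coeff τ (D0 i u) = iterD (Finsupp.single i 1) (MvPolynomial.coeff τ u) := by
  classical
  unfold D0
  rw [MvPolynomial.coeff_sum]
  by_cases hτ : τ ∈ u.support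
  · rw [Finset.sum_eq_single_of_mem τ hτ (fun m _ hm => by
      simp [MvPolynomial.coeff_monomial, hm])]
    simp [MvPolynomial.coeff_monomial]
  · rw [Finset.sum_eq_zero (fun m hm => by
      have hne : m ≠ τ := fun h => hτ (h ▸ hm)
      simp [MvPolynomial.coeff_monomial, hne])]
    rw [MvPolynomial.notMem_support_iff.mp hτ, iterD_zero]

lemma D0_C (i : Fin r) (c : MvPowerSeries (Fin r) ℂ) :
    D0 i (MvPolynomial.C c : MixJet k r l) =
      MvPolynomial.C (iterD (Finsupp.single i 1) c) := by
  apply MvPolynomial.ext; intro τ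
  rw [coeff_D0]
  rw [MvPolynomial.coeff_C, MvPolynomial.coeff_C]
  split
  · rfl
  · exact iterD_zero _

lemma D0_add (i : Fin r) (u v : MixJet k r l) : D0 i (u + v) = D0 i u + D0 i v := by
  apply MvPolynomial.ext; intro τ
  rw [MvPolynomial.coeff_add, coeff_D0, coeff_D0, coeff_D0, MvPolynomial.coeff_add, iterD_add]

lemma D0_mul_X (i : Fin r) (u : MixJet k r l) (q : HatIdx k l × Fin r) :
    D0 i (u * MvPolynomial.X q) = D0 i u * MvPolynomial.X q := by
  classical
  apply MvPolynomial.ext; intro τ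
  rw [coeff_D0, MvPolynomial.coeff_mul_X', MvPolynomial.coeff_mul_X', coeff_D0]
  split
  · rfl
  · rw [iterD_zero]

/-- coefficient formula for `pderiv`. -/
lemma coeff_pderiv {S : Type*} [CommRing S] {σ' : Type*} [DecidableEq σ'] (q : σ')
    (u : MvPolynomial σ' S) (m : σ' →₀ ℕ) :
    MvPolynomial.coeff m (MvPolynomial.pderiv q u) =
      (m q + 1) • MvPolynomial.coeff (m + Finsupp.single q 1) u := by
  classical
  conv_lhs => rw [MvPolynomial.as_sum u]
  rw [map_sum, MvPolynomial.coeff_sum]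
  have key : ∀ τ ∈ u.support, τ ≠ m + Finsupp.single q 1 →
      MvPolynomial.coeff m (MvPolynomial.pderiv q (MvPolynomial.monomial τ
        (MvPolynomial.coeff τ u))) = 0 := by
    intro τ _ hτ
    rw [MvPolynomial.pderiv_monomial, MvPolynomial.coeff_monomial]
    by_cases hq : τ q = 0
    · simp [hq]
    · rw [if_neg]
      intro h
      apply hτ
      have : Finsupp.single q 1 ≤ τ := Finsupp.single_le_iff.mpr (by omega)
      rw [← h, tsub_add_cancel_of_le this]
  rw [Finset.sum_eq_single (m + Finsupp.single q 1) key (fun h => by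
    rw [MvPolynomial.notMem_support_iff.mp h, map_zero, map_zero, MvPolynomial.coeff_zero])]
  rw [MvPolynomial.pderiv_monomial]
  have h1 : (m + Finsupp.single q 1) - Finsupp.single q 1 = m := add_tsub_cancel_right _ _
  rw [h1, MvPolynomial.coeff_monomial, if_pos rfl]
  have h2 : ((m + Finsupp.single q 1 : σ' →₀ ℕ)) q = m q + 1 := by
    rw [Finsupp.add_apply, Finsupp.single_eq_same]
  rw [h2, nsmul_eq_mul, mul_comm]

end JetAux

namespace JetAux

variable {σ : Type*}

lemma pow_linearize {c : ℕ} {f h : MvPowerSeries σ ℂ} (hh : ordGE c h) (n : ℕ) :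
    ∃ ρ, (f + h) ^ n = f ^ n + n • (f ^ (n - 1) * h) + ρ ∧ ordGE (2 * c) ρ := by
  induction n with
  | zero => exact ⟨0, by simp, ordGE_zero _⟩
  | succ n ih =>
      obtain ⟨ρ, hρeq, hρ⟩ := ih
      match n, hρeq with
      | 0, _ =>
          refine ⟨0, by simp [pow_succ], ordGE_zero _⟩
      | (n' + 1), hρeq =>
          refine ⟨(n' + 1) • (f ^ n' * (h * h)) + ρ * (f + h), ?_, ?_⟩
          · rw [pow_succ, hρeq]
            simp only [Nat.add_sub_cancel, nsmul_eq_mul]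
            push_cast
            ring
          · exact ordGE_add
              (ordGE_nsmul (ordGE_mul_left _ (by simpa [two_mul] using ordGE_mul hh hh)))
              (ordGE_mul_right hρ _)

lemma prod_linearize {ι : Type*} [DecidableEq ι] (t : Finset ι)
    (b li ρ : ι → MvPowerSeries σ ℂ) {c : ℕ}
    (hli : ∀ i ∈ t, ordGE c (li i)) (hρ : ∀ i ∈ t, ordGE (2 * c) (ρ i)) :
    ∃ R, (∏ i ∈ t, (b i + li i + ρ i)) =
        (∏ i ∈ t, b i) + (∑ i ∈ t, li i * ∏ j ∈ t.erase i, b j) + R ∧ ordGE (2 * c) R := by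
  induction t using Finset.induction_on with
  | empty => exact ⟨0, by simp, ordGE_zero _⟩
  | @insert a s ha ih =>
      obtain ⟨R, hReq, hR⟩ := ih (fun i hi => hli i (Finset.mem_insert_of_mem hi))
        (fun i hi => hρ i (Finset.mem_insert_of_mem hi))
      have hLs : ordGE c (∑ i ∈ s, li i * ∏ j ∈ s.erase i, b j) :=
        ordGE_sum fun i hi => ordGE_mul_right (hli i (Finset.mem_insert_of_mem hi)) _
      refine ⟨b a * R + li a * ((∑ i ∈ s, li i * ∏ j ∈ s.erase i, b j) + R) +
          ρ a * ((∏ i ∈ s, b i) + (∑ i ∈ s, li i * ∏ j ∈ s.erase i, b j) + R), ?_, ?_⟩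
      · rw [Finset.prod_insert ha, hReq, Finset.prod_insert ha, Finset.sum_insert ha,
          Finset.erase_insert ha]
        have hsum : ∑ i ∈ s, li i * ∏ j ∈ (insert a s).erase i, b j =
            b a * ∑ i ∈ s, li i * ∏ j ∈ s.erase i, b j := by
          rw [Finset.mul_sum]
          apply Finset.sum_congr rfl
          intro i hi
          have hai : a ≠ i := fun h => ha (h ▸ hi)
          rw [Finset.erase_insert_of_ne hai,
            Finset.prod_insert (fun h => ha (Finset.mem_of_mem_erase h))]
          ring
        rw [hsum]
        ring
      · refine ordGE_add (ordGE_add (ordGE_mul_left _ hR) ?_)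
          (ordGE_mul_right (hρ a (Finset.mem_insert_self a s)) _)
        have h1 : ordGE c (li a) := hli a (Finset.mem_insert_self a s)
        have h2 : ordGE c ((∑ i ∈ s, li i * ∏ j ∈ s.erase i, b j) + R) :=
          ordGE_add hLs (ordGE_mono hR (by omega))
        simpa [two_mul] using ordGE_mul h1 h2

lemma coeff_iterD_single {i : σ} (cc : MvPowerSeries σ ℂ) (m : σ →₀ ℕ) :
    MvPowerSeries.coeff m (iterD (Finsupp.single i 1) cc) =
      ((m i + 1 : ℕ) : ℂ) * MvPowerSeries.coeff (m + Finsupp.single i 1) cc := by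
  rw [coeff_iterD]
  congr 2
  rw [Finsupp.prod_single_index (by simp)]
  simp [Nat.descFactorial_one]

end JetAux

namespace JetAux

variable {σ τ : Type*} [Fintype σ] [DecidableEq σ]

lemma reidx (i : σ) {F H : σ → MvPowerSeries τ ℂ}
    (hF : ∀ j, MvPowerSeries.constantCoeff (F j) = 0)
    (cc : MvPowerSeries σ ℂ) {c : ℕ} (hc : 1 ≤ c) :
    ordGE (2 * c)
      ((∑ m ∈ Finset.Iic (Finsupp.equivFunOnFinite.symm fun _ : σ => 2 * c),
          MvPowerSeries.coeff m (iterD (Finsupp.single i 1) cc) •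
            ((∏ s : σ, F s ^ m s) * H i))
        - ∑ m ∈ Finset.Iic (Finsupp.equivFunOnFinite.symm fun _ : σ => 2 * c),
            MvPowerSeries.coeff m cc •
              ((m i) • (F i ^ (m i - 1) * H i) * ∏ j ∈ Finset.univ.erase i, F j ^ m j)) := by
  classical
  set bnd : σ →₀ ℕ := Finsupp.equivFunOnFinite.symm fun _ : σ => 2 * c with hbnd
  have hbnd_apply : ∀ j, bnd j = 2 * c := fun j => rfl
  have hei_apply : ∀ j, (Finsupp.single i 1 : σ →₀ ℕ) j = if i = j then 1 else 0 :=
    fun j => Finsupp.single_apply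
  set T := Finset.Iic bnd with hTdef
  set S' := Finset.Iic (bnd - Finsupp.single i 1) with hS'def
  have hS'T : S' ⊆ T := Finset.Iic_subset_Iic.mpr tsub_le_self
  set f : (σ →₀ ℕ) → MvPowerSeries τ ℂ := fun m =>
    MvPowerSeries.coeff m (iterD (Finsupp.single i 1) cc) • ((∏ s : σ, F s ^ m s) * H i)
    with hfdef
  set g : (σ →₀ ℕ) → MvPowerSeries τ ℂ := fun m =>
    MvPowerSeries.coeff m cc •
      ((m i) • (F i ^ (m i - 1) * H i) * ∏ j ∈ Finset.univ.erase i, F j ^ m j) with hgdef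
  -- the sum of g over T equals sum over the filtered set
  have hfilter : ∑ m ∈ T.filter (fun m => Finsupp.single i 1 ≤ m), g m = ∑ m ∈ T, g m := by
    apply Finset.sum_filter_of_ne
    intro m _ hg
    rw [Finsupp.single_le_iff]
    by_contra hmi
    apply hg
    have : m i = 0 := by omega
    simp [hgdef, this]
  -- the bijection between S' and the filtered set
  have hbij : ∑ m ∈ S', f m = ∑ m ∈ T.filter (fun m => Finsupp.single i 1 ≤ m), g m := by
    apply Finset.sum_nbij' (fun m => m + Finsupp.single i 1) (fun m => m - Finsupp.single i 1)
    · intro a ha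
      rw [Finset.mem_filter]
      constructor
      · rw [hTdef, Finset.mem_Iic, Finsupp.le_def]
        intro j
        rw [hS'def, Finset.mem_Iic, Finsupp.le_def] at ha
        have := ha j
        rw [Finsupp.tsub_apply] at this
        rw [Finsupp.add_apply, hbnd_apply]
        have h2 := hei_apply j
        have h3 := hbnd_apply j
        split at h2 <;> omega
      · rw [Finsupp.le_def]
        intro j
        rw [Finsupp.add_apply]
        omega
    · intro a ha
      rw [Finset.mem_filter] at ha
      rw [hS'def, Finset.mem_Iic, Finsupp.le_def]
      intro j
      rw [Finsupp.tsub_apply, Finsupp.tsub_apply]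
      rw [hTdef, Finset.mem_Iic, Finsupp.le_def] at *
      have := ha.1 j
      omega
    · intro a _; exact add_tsub_cancel_right _ _
    · intro a ha
      rw [Finset.mem_filter] at ha
      exact tsub_add_cancel_of_le ha.2
    · intro m' hm'
      -- value matching
      have hii : (m' + Finsupp.single i 1 : σ →₀ ℕ) i = m' i + 1 := by
        rw [Finsupp.add_apply, Finsupp.single_eq_same]
      have hprod : ∏ j ∈ Finset.univ.erase i, F j ^ ((m' + Finsupp.single i 1 : σ →₀ ℕ) j) =
          ∏ j ∈ Finset.univ.erase i, F j ^ (m' j) := by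
        apply Finset.prod_congr rfl
        intro j hj
        have hji : i ≠ j := fun h => (Finset.mem_erase.mp hj).1 h.symm
        rw [Finsupp.add_apply, Finsupp.single_apply, if_neg hji, add_zero]
      rw [hfdef, hgdef]
      simp only [hii, hprod, Nat.add_sub_cancel]
      rw [coeff_iterD_single, smul_mul_assoc, ← Nat.cast_smul_eq_nsmul ℂ (m' i + 1), smul_smul]
      rw [mul_comm (((m' i + 1 : ℕ) : ℂ)) _]
      congr 1
      rw [← Finset.mul_prod_erase Finset.univ (fun j => F j ^ m' j) (Finset.mem_univ i)]
      ring
  -- now the difference is the sum over T \ S'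
  have hsplit : ∑ m ∈ T \ S', f m + ∑ m ∈ S', f m = ∑ m ∈ T, f m := Finset.sum_sdiff hS'T
  have hdiff : (∑ m ∈ T, f m) - ∑ m ∈ T, g m = ∑ m ∈ T \ S', f m := by
    rw [← hfilter, ← hbij, ← hsplit]; ring
  rw [hdiff]
  apply ordGE_sum
  intro m hm
  rw [Finset.mem_sdiff, hTdef, hS'def, Finset.mem_Iic, Finset.mem_Iic] at hm
  obtain ⟨hm1, hm2⟩ := hm
  have hwt : 2 * c ≤ wt m := by
    rw [Finsupp.le_def] at hm2
    push_neg at hm2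
    obtain ⟨j, hj⟩ := hm2
    rw [Finsupp.tsub_apply, hbnd_apply] at hj
    have h2 := hei_apply j
    have hmj : m j ≤ 2 * c := by
      rw [Finsupp.le_def] at hm1
      exact (hbnd_apply j) ▸ hm1 j
    have hji : m i ≥ 2 * c := by
      by_cases h : i = j
      · subst h; rw [Finsupp.single_eq_same] at hj; omega
      · rw [Finsupp.single_apply, if_neg h] at hj; omega
    exact le_trans hji (le_wt i m)
  exact ordGE_smul (ordGE_mul_right (ordGE_mono (prodPow_ordGE hF m) hwt) _)

lemma taylorC {c : ℕ} (hc : 1 ≤ c) {F H : σ → MvPowerSeries τ ℂ}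
    (hF : ∀ j, MvPowerSeries.constantCoeff (F j) = 0)
    (hH : ∀ j, ordGE c (H j)) (cc : MvPowerSeries σ ℂ) :
    ordGE (2 * c) (fsubst (fun j => F j + H j) cc - fsubst F cc
      - ∑ i : σ, fsubst F (iterD (Finsupp.single i 1) cc) * H i) := by
  classical
  have hH0 : ∀ j, MvPowerSeries.constantCoeff (H j) = 0 := by
    intro j
    have := hH j 0 (by rw [wt_zero]; omega)
    rwa [MvPowerSeries.coeff_zero_eq_constantCoeff] at this
  have hFH : ∀ j, MvPowerSeries.constantCoeff (F j + H j) = 0 := fun j => by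
    rw [map_add, hF j, hH0 j, add_zero]
  set T := Finset.Iic (Finsupp.equivFunOnFinite.symm fun _ : σ => 2 * c) with hT
  -- abbreviations
  set X := fsubst (fun j => F j + H j) cc with hX
  set Y := fsubst F cc with hY
  set Z : σ → MvPowerSeries τ ℂ :=
    fun i => fsubst F (iterD (Finsupp.single i 1) cc) * H i with hZ
  set PFH : (σ →₀ ℕ) → MvPowerSeries τ ℂ :=
    fun m => ∏ s : σ, (F s + H s) ^ m s with hPFH
  set PF : (σ →₀ ℕ) → MvPowerSeries τ ℂ := fun m => ∏ s : σ, F s ^ m s with hPF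
  set mid : (σ →₀ ℕ) → MvPowerSeries τ ℂ :=
    fun m => ∑ s : σ, (m s) • (F s ^ (m s - 1) * H s) * ∏ j ∈ Finset.univ.erase s, F j ^ m j
    with hmid
  set X' : MvPowerSeries τ ℂ := ∑ m ∈ T, MvPowerSeries.coeff m cc • PFH m with hX'
  set Y' : MvPowerSeries τ ℂ := ∑ m ∈ T, MvPowerSeries.coeff m cc • PF m with hY'
  set W : σ → MvPowerSeries τ ℂ := fun i => ∑ m ∈ T,
    MvPowerSeries.coeff m cc •
      ((m i) • (F i ^ (m i - 1) * H i) * ∏ j ∈ Finset.univ.erase i, F j ^ m j) with hW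
  set Z'' : σ → MvPowerSeries τ ℂ := fun i => ∑ m ∈ T,
    MvPowerSeries.coeff m (iterD (Finsupp.single i 1) cc) • (PF m * H i) with hZ''
  have A1 : ordGE (2 * c) (X - X') := by
    have := fsubst_approx hFH cc (2 * c)
    simpa [hX, hX', hT, hPFH] using this
  have A2 : ordGE (2 * c) (Y - Y') := by
    have := fsubst_approx hF cc (2 * c)
    simpa [hY, hY', hT, hPF] using this
  have key : ∀ m : σ →₀ ℕ, ordGE (2 * c) (PFH m - PF m - mid m) := by
    intro m
    have hpl := fun s => pow_linearize (f := F s) (hH s) (m s)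
    choose ρ hρeq hρord using hpl
    obtain ⟨R, hReq, hRord⟩ := prod_linearize (c := c) Finset.univ
      (fun s => F s ^ m s) (fun s => (m s) • (F s ^ (m s - 1) * H s)) ρ
      (fun s _ => ordGE_nsmul (ordGE_mul_left _ (hH s)))
      (fun s _ => hρord s)
    have h1 : PFH m = ∏ s : σ, (F s ^ m s + (m s) • (F s ^ (m s - 1) * H s) + ρ s) :=
      Finset.prod_congr rfl fun s _ => hρeq s
    have h2 : PFH m - PF m - mid m = R := by
      rw [h1, hReq, hPF, hmid]
      ring
    rwa [h2]
  have hZZ'' : ∀ i, Z i - Z'' i =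
      (fsubst F (iterD (Finsupp.single i 1) cc)
        - ∑ m ∈ T, MvPowerSeries.coeff m (iterD (Finsupp.single i 1) cc) • PF m) * H i := by
    intro i
    rw [sub_mul, hZ, hZ'', Finset.sum_mul]
    congr 1
    exact Finset.sum_congr rfl fun m _ => (smul_mul_assoc _ _ _).symm
  have B : ∀ i, ordGE (2 * c) (Z i - Z'' i) := by
    intro i
    rw [hZZ'' i]
    exact ordGE_mul_right (by
      have := fsubst_approx hF (iterD (Finsupp.single i 1) cc) (2 * c)
      simpa [hT, hPF] using this) _
  have C : ∀ i, ordGE (2 * c) (Z'' i - W i) := by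
    intro i
    have := reidx (H := H) i hF cc hc
    simpa [hZ'', hW, hT, hPF] using this
  have hM : ∑ m ∈ T, MvPowerSeries.coeff m cc • mid m = ∑ i : σ, W i := by
    rw [hW, Finset.sum_comm]
    apply Finset.sum_congr rfl
    intro m _
    rw [hmid, Finset.smul_sum]
  have hC2 : ordGE (2 * c) (X' - Y' - ∑ i : σ, W i) := by
    have heq : X' - Y' - ∑ i : σ, W i = ∑ m ∈ T,
        MvPowerSeries.coeff m cc • (PFH m - PF m - mid m) := by
      rw [← hM, hX', hY', ← Finset.sum_sub_distrib, ← Finset.sum_sub_distrib]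
      exact Finset.sum_congr rfl fun m _ => by rw [smul_sub, smul_sub]
    rw [heq]
    exact ordGE_sum fun m _ => ordGE_smul (key m)
  have hEq : X - Y - (∑ i : σ, Z i)
      = (X - X') + -(Y - Y') + (X' - Y' - ∑ i : σ, W i)
        + ∑ i : σ, (-(Z i - Z'' i) - (Z'' i - W i)) := by
    have e0 : ∑ i : σ, (-(Z i - Z'' i) - (Z'' i - W i)) = ∑ i : σ, (W i - Z i) :=
      Finset.sum_congr rfl fun i _ => by abel
    rw [e0, Finset.sum_sub_distrib]
    abel
  rw [hEq]
  exact ordGE_add (ordGE_add (ordGE_add A1 (ordGE_neg A2)) hC2)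
    (ordGE_sum fun i _ => ordGE_sub (ordGE_neg (B i)) (C i))

end JetAux

namespace JetAux

variable {k r l : ℕ}

lemma jetEval_zero (F : Fin r → MvPowerSeries (Fin k) ℂ) :
    jetEval (0 : MixJet k r l) F = 0 := by
  unfold jetEval
  rw [MvPolynomial.support_zero, Finset.sum_empty]

/-- the formal first-order variation of `jetEval u` at `F` in direction `H`. -/
noncomputable def linTerm (u : MixJet k r l) (F H : Fin r → MvPowerSeries (Fin k) ℂ) :
    MvPowerSeries (Fin k) ℂ :=
  (∑ q : HatIdx k l × Fin r,
      jetEval (MvPolynomial.pderiv q u) F * iterD (q.1.1 : Fin k →₀ ℕ) (H q.2))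
  + ∑ i : Fin r, jetEval (D0 i u) F * H i

lemma wt_def {σ : Type*} (m : σ →₀ ℕ) : wt m = m.sum fun _ e => e := rfl

lemma linTerm_ordGE {c : ℕ} {F H : Fin r → MvPowerSeries (Fin k) ℂ}
    (hH : ∀ i, ordGE c (H i)) (u : MixJet k r l) :
    ordGE (c - l) (linTerm u F H) := by
  apply ordGE_add
  · apply ordGE_sum
    intro q _
    apply ordGE_mul_left
    have h1 : wt (q.1.1 : Fin k →₀ ℕ) ≤ l := by rw [wt_def]; exact q.1.2.2
    exact ordGE_mono (ordGE_iterD (hH q.2) _) (by omega)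
  · apply ordGE_sum
    intro i _
    exact ordGE_mul_left _ (ordGE_mono (hH i) (by omega))

lemma linTerm_add (u v : MixJet k r l) (F H : Fin r → MvPowerSeries (Fin k) ℂ) :
    linTerm (u + v) F H = linTerm u F H + linTerm v F H := by
  unfold linTerm
  rw [← add_add_add_comm, ← Finset.sum_add_distrib, ← Finset.sum_add_distrib]
  congr 1
  · exact Finset.sum_congr rfl fun q _ => by rw [map_add, jetEval_add, add_mul]
  · exact Finset.sum_congr rfl fun i _ => by rw [D0_add, jetEval_add, add_mul]

lemma linTerm_C (cc : MvPowerSeries (Fin r) ℂ) (F H : Fin r → MvPowerSeries (Fin k) ℂ) :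
    linTerm (MvPolynomial.C cc : MixJet k r l) F H =
      ∑ i : Fin r, fsubst F (iterD (Finsupp.single i 1) cc) * H i := by
  unfold linTerm
  rw [Finset.sum_eq_zero (fun q _ => by
    rw [MvPolynomial.pderiv_C, jetEval_zero, zero_mul]), zero_add]
  exact Finset.sum_congr rfl fun i _ => by rw [D0_C, jetEval_C]

lemma linTerm_mul_X (u : MixJet k r l) (q : HatIdx k l × Fin r)
    (F H : Fin r → MvPowerSeries (Fin k) ℂ) :
    linTerm (u * MvPolynomial.X q) F H =
      linTerm u F H * iterD (q.1.1 : Fin k →₀ ℕ) (F q.2)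
        + jetEval u F * iterD (q.1.1 : Fin k →₀ ℕ) (H q.2) := by
  classical
  unfold linTerm
  have hterm : ∀ q' : HatIdx k l × Fin r,
      jetEval (MvPolynomial.pderiv q' (u * MvPolynomial.X q)) F =
        jetEval (MvPolynomial.pderiv q' u) F * iterD (q.1.1 : Fin k →₀ ℕ) (F q.2)
          + (if q' = q then jetEval u F else 0) := by
    intro q'
    rw [MvPolynomial.pderiv_mul, jetEval_add, jetEval_mul_X]
    congr 1
    by_cases h : q' = q
    · subst h
      rw [if_pos rfl, MvPolynomial.pderiv_X_self, mul_one]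
    · rw [if_neg h, MvPolynomial.pderiv_X, Pi.single_eq_of_ne' h, mul_zero, jetEval_zero]
  have h1 : ∑ q' : HatIdx k l × Fin r,
      jetEval (MvPolynomial.pderiv q' (u * MvPolynomial.X q)) F *
        iterD (q'.1.1 : Fin k →₀ ℕ) (H q'.2) =
      (∑ q' : HatIdx k l × Fin r, jetEval (MvPolynomial.pderiv q' u) F *
        iterD (q'.1.1 : Fin k →₀ ℕ) (H q'.2)) * iterD (q.1.1 : Fin k →₀ ℕ) (F q.2)
      + jetEval u F * iterD (q.1.1 : Fin k →₀ ℕ) (H q.2) := by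
    calc ∑ q' : HatIdx k l × Fin r,
        jetEval (MvPolynomial.pderiv q' (u * MvPolynomial.X q)) F *
          iterD (q'.1.1 : Fin k →₀ ℕ) (H q'.2)
        = ∑ q' : HatIdx k l × Fin r,
            (jetEval (MvPolynomial.pderiv q' u) F * iterD (q'.1.1 : Fin k →₀ ℕ) (H q'.2) *
              iterD (q.1.1 : Fin k →₀ ℕ) (F q.2)
            + (if q' = q then jetEval u F * iterD (q'.1.1 : Fin k →₀ ℕ) (H q'.2) else 0)) := by
          apply Finset.sum_congr rfl
          intro q' _
          rw [hterm q', add_mul, ite_mul, zero_mul, mul_right_comm]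
      _ = _ := by
          rw [Finset.sum_add_distrib, Finset.sum_ite_eq' Finset.univ q,
            if_pos (Finset.mem_univ q), ← Finset.sum_mul]
  have h2 : ∑ i : Fin r, jetEval (D0 i (u * MvPolynomial.X q)) F * H i =
      (∑ i : Fin r, jetEval (D0 i u) F * H i) * iterD (q.1.1 : Fin k →₀ ℕ) (F q.2) := by
    rw [Finset.sum_mul]
    exact Finset.sum_congr rfl fun i _ => by
      rw [D0_mul_X, jetEval_mul_X, mul_right_comm]
  rw [h1, h2]
  ring

lemma main_linearize {c : ℕ} (hcl : l + 1 ≤ c) {F H : Fin r → MvPowerSeries (Fin k) ℂ}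
    (hF : ∀ i, MvPowerSeries.constantCoeff (F i) = 0)
    (hH : ∀ i, ordGE c (H i)) (u : MixJet k r l) :
    ordGE (2 * (c - l))
      (jetEval u (fun i => F i + H i) - jetEval u F - linTerm u F H) := by
  induction u using MvPolynomial.induction_on with
  | C cc =>
      rw [jetEval_C, jetEval_C, linTerm_C]
      exact ordGE_mono (taylorC (by omega) hF hH cc) (by omega)
  | add u v hu hv =>
      rw [jetEval_add, jetEval_add, linTerm_add]
      have heq : jetEval u (fun i => F i + H i) + jetEval v (fun i => F i + H i)
          - (jetEval u F + jetEval v F) - (linTerm u F H + linTerm v F H)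
          = (jetEval u (fun i => F i + H i) - jetEval u F - linTerm u F H)
            + (jetEval v (fun i => F i + H i) - jetEval v F - linTerm v F H) := by ring
      rw [heq]
      exact ordGE_add hu hv
  | mul_X u q hu =>
      rw [jetEval_mul_X, jetEval_mul_X, linTerm_mul_X]
      have hgh : iterD (q.1.1 : Fin k →₀ ℕ) ((fun i => F i + H i) q.2) =
          iterD (q.1.1 : Fin k →₀ ℕ) (F q.2) + iterD (q.1.1 : Fin k →₀ ℕ) (H q.2) :=
        iterD_add _ _ _
      rw [hgh]
      have hrw : jetEval u (fun i => F i + H i) *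
            (iterD (q.1.1 : Fin k →₀ ℕ) (F q.2) + iterD (q.1.1 : Fin k →₀ ℕ) (H q.2))
          - jetEval u F * iterD (q.1.1 : Fin k →₀ ℕ) (F q.2)
          - (linTerm u F H * iterD (q.1.1 : Fin k →₀ ℕ) (F q.2)
              + jetEval u F * iterD (q.1.1 : Fin k →₀ ℕ) (H q.2))
          = (jetEval u (fun i => F i + H i) - jetEval u F - linTerm u F H) *
              (iterD (q.1.1 : Fin k →₀ ℕ) (F q.2) + iterD (q.1.1 : Fin k →₀ ℕ) (H q.2))
            + linTerm u F H * iterD (q.1.1 : Fin k →₀ ℕ) (H q.2) := by ring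
      rw [hrw]
      apply ordGE_add (ordGE_mul_right hu _)
      have hL : ordGE (c - l) (linTerm u F H) := linTerm_ordGE hH u
      have hhq : ordGE (c - l) (iterD (q.1.1 : Fin k →₀ ℕ) (H q.2)) := by
        have h1 : wt (q.1.1 : Fin k →₀ ℕ) ≤ l := by rw [wt_def]; exact q.1.2.2
        exact ordGE_mono (ordGE_iterD (hH q.2) _) (by omega)
      simpa [two_mul] using ordGE_mul hL hhq

end JetAux

namespace JetAux

variable {σ : Type*} [Fintype σ] [DecidableEq σ]

/-- the product of descending factorials, as a function of the degree `D`. -/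
def phi (ν D : σ →₀ ℕ) : ℂ := ∏ s : σ, (Nat.descFactorial (D s) (ν s) : ℂ)

lemma phi_zero (D : σ →₀ ℕ) : phi 0 D = 1 := by
  unfold phi
  simp

lemma desc_step (D j : ℕ) : (D + 1).descFactorial j =
    D.descFactorial j + j * D.descFactorial (j - 1) := by
  cases j with
  | zero => simp
  | succ j =>
      rw [Nat.succ_descFactorial_succ, Nat.descFactorial_succ, Nat.add_sub_cancel]
      rcases le_or_gt j D with h | h
      · have hD : D + 1 = (D - j) + (j + 1) := by omega
        rw [hD, add_mul]
      · have h0 : D.descFactorial j = 0 := Nat.descFactorial_eq_zero_iff_lt.mpr h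
        have h1 : (D + 1).descFactorial (j + 1) = 0 :=
          Nat.descFactorial_eq_zero_iff_lt.mpr (by omega)
        rw [Nat.succ_descFactorial_succ] at h1
        rw [h1, h0]
        ring

lemma phi_step (ν D : σ →₀ ℕ) (s : σ) :
    phi ν (D + Finsupp.single s 1) =
      phi ν D + (ν s : ℂ) * phi (ν - Finsupp.single s 1) D := by
  classical
  unfold phi
  rw [← Finset.mul_prod_erase Finset.univ
      (fun j => (Nat.descFactorial ((D + Finsupp.single s 1 : σ →₀ ℕ) j) (ν j) : ℂ))
      (Finset.mem_univ s),
    ← Finset.mul_prod_erase Finset.univ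
      (fun j => (Nat.descFactorial (D j) (ν j) : ℂ)) (Finset.mem_univ s),
    ← Finset.mul_prod_erase Finset.univ
      (fun j => (Nat.descFactorial (D j) ((ν - Finsupp.single s 1 : σ →₀ ℕ) j) : ℂ))
      (Finset.mem_univ s)]
  have hP1 : ∏ j ∈ Finset.univ.erase s,
      (Nat.descFactorial ((D + Finsupp.single s 1 : σ →₀ ℕ) j) (ν j) : ℂ) =
      ∏ j ∈ Finset.univ.erase s, (Nat.descFactorial (D j) (ν j) : ℂ) := by
    apply Finset.prod_congr rfl
    intro j hj
    have hjs : s ≠ j := fun h => (Finset.mem_erase.mp hj).1 h.symm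
    rw [Finsupp.add_apply, Finsupp.single_apply, if_neg hjs, add_zero]
  have hP2 : ∏ j ∈ Finset.univ.erase s,
      (Nat.descFactorial (D j) ((ν - Finsupp.single s 1 : σ →₀ ℕ) j) : ℂ) =
      ∏ j ∈ Finset.univ.erase s, (Nat.descFactorial (D j) (ν j) : ℂ) := by
    apply Finset.prod_congr rfl
    intro j hj
    have hjs : s ≠ j := fun h => (Finset.mem_erase.mp hj).1 h.symm
    rw [Finsupp.tsub_apply, Finsupp.single_apply, if_neg hjs, Nat.sub_zero]
  rw [hP1, hP2]
  have hs1 : (D + Finsupp.single s 1 : σ →₀ ℕ) s = D s + 1 := by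
    rw [Finsupp.add_apply, Finsupp.single_eq_same]
  have hs2 : (ν - Finsupp.single s 1 : σ →₀ ℕ) s = ν s - 1 := by
    rw [Finsupp.tsub_apply, Finsupp.single_eq_same]
  rw [hs1, hs2]
  have hd := desc_step (D s) (ν s)
  have hd' : ((D s + 1).descFactorial (ν s) : ℂ) =
      ((D s).descFactorial (ν s) : ℂ) + (ν s : ℂ) * ((D s).descFactorial (ν s - 1) : ℂ) := by
    exact_mod_cast congrArg (Nat.cast : ℕ → ℂ) hd
  rw [hd']
  ring

lemma LI_aux (n : ℕ) : ∀ (S : Finset (σ →₀ ℕ)) (A : (σ →₀ ℕ) → ℂ) (base : σ →₀ ℕ),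
    (∑ ν ∈ S, wt ν) ≤ n → (∀ ν, A ν ≠ 0 → ν ∈ S) →
    (∀ D, base ≤ D → ∑ ν ∈ S, A ν * phi ν D = 0) → ∀ ν, A ν = 0 := by
  induction n using Nat.strong_induction_on with
  | _ n IH =>
    intro S A base hn hsupp hvan ν0
    by_cases hS0 : ∀ τ ∈ S, τ = 0
    · by_contra hA
      have hν0 : ν0 ∈ S := hsupp _ hA
      have hz : ν0 = 0 := hS0 _ hν0
      subst hz
      have hsingle : S = {0} :=
        Finset.eq_singleton_iff_unique_mem.mpr ⟨hν0, fun x hx => hS0 x hx⟩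
      have := hvan base le_rfl
      rw [hsingle, Finset.sum_singleton, phi_zero, mul_one] at this
      exact hA this
    · push_neg at hS0
      obtain ⟨τ0, hτ0S, hτ0⟩ := hS0
      have hτs : ∃ s : σ, τ0 s ≠ 0 := by
        by_contra hc
        push_neg at hc
        exact hτ0 (Finsupp.ext hc)
      obtain ⟨s, hs⟩ := hτs
      have hwtτ0 : 1 ≤ wt τ0 := le_trans (by omega) (le_wt s τ0)
      have h1n : 1 ≤ n := le_trans (le_trans hwtτ0 (Finset.single_le_sum
        (f := fun ν => wt ν) (fun _ _ => Nat.zero_le _) hτ0S)) hn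
      set Tf := S.filter (fun ν => Finsupp.single s 1 ≤ ν) with hTf
      have hτ0Tf : τ0 ∈ Tf := Finset.mem_filter.mpr
        ⟨hτ0S, Finsupp.single_le_iff.mpr (by omega)⟩
      set S' := Tf.image (fun ν => ν - Finsupp.single s 1) with hS'
      set A' := fun ν => ((ν s + 1 : ℕ) : ℂ) * A (ν + Finsupp.single s 1) with hA'
      have hinj : ∀ x ∈ Tf, ∀ y ∈ Tf,
          x - Finsupp.single s 1 = y - Finsupp.single s 1 → x = y := by
        intro x hx y hy hxy
        have hx1 := (Finset.mem_filter.mp hx).2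
        have hy1 := (Finset.mem_filter.mp hy).2
        rw [← tsub_add_cancel_of_le hx1, ← tsub_add_cancel_of_le hy1, hxy]
      -- the shifted coefficients vanish
      have hupper : ∀ τ, Finsupp.single s 1 ≤ τ → A τ = 0 := by
        -- via IH applied to (S', A')
        have hmeas : ∑ ν ∈ S', wt ν ≤ n - 1 := by
          rw [hS', Finset.sum_image hinj]
          have h1 : ∑ τ ∈ Tf, wt (τ - Finsupp.single s 1) + 1 ≤ ∑ τ ∈ Tf, wt τ := by
            have : ∀ τ ∈ Tf, wt (τ - Finsupp.single s 1) + 1 = wt τ := by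
              intro τ hτ
              have hle := (Finset.mem_filter.mp hτ).2
              have := wt_tsub hle
              have hwt1 : wt (Finsupp.single s 1 : σ →₀ ℕ) = 1 := by
                rw [wt_def, Finsupp.sum_single_index]; rfl
              have hwle : 1 ≤ wt τ := hwt1 ▸ (by
                have : wt (Finsupp.single s 1 : σ →₀ ℕ) ≤ wt τ := by
                  rw [← tsub_add_cancel_of_le hle, wt_add]; omega
                exact this)
              omega
            calc ∑ τ ∈ Tf, wt (τ - Finsupp.single s 1) + 1
                ≤ ∑ τ ∈ Tf, (wt (τ - Finsupp.single s 1) + 1) := by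
                  have hne : Tf.Nonempty := ⟨τ0, hτ0Tf⟩
                  rw [Finset.sum_add_distrib]
                  have : 1 ≤ Tf.card := Finset.card_pos.mpr hne
                  simp only [Finset.sum_const, smul_eq_mul, mul_one]
                  omega
              _ = ∑ τ ∈ Tf, wt τ := Finset.sum_congr rfl this
          have h2 : ∑ τ ∈ Tf, wt τ ≤ ∑ ν ∈ S, wt ν :=
            Finset.sum_le_sum_of_subset (Finset.filter_subset _ _)
          omega
        have hsupp' : ∀ ν, A' ν ≠ 0 → ν ∈ S' := by
          intro ν hν
          have hAν : A (ν + Finsupp.single s 1) ≠ 0 := by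
            intro h
            apply hν
            simp only [hA']
            rw [h, mul_zero]
          have hmem : ν + Finsupp.single s 1 ∈ Tf := Finset.mem_filter.mpr
            ⟨hsupp _ hAν, Finsupp.single_le_iff.mpr (by
              rw [Finsupp.add_apply, Finsupp.single_eq_same]; omega)⟩
          rw [hS', Finset.mem_image]
          exact ⟨ν + Finsupp.single s 1, hmem, add_tsub_cancel_right _ _⟩
        have hvan' : ∀ D, base ≤ D → ∑ ν ∈ S', A' ν * phi ν D = 0 := by
          intro D hD
          have hreix : ∑ ν ∈ S', A' ν * phi ν D =
              ∑ τ ∈ Tf, (τ s : ℂ) * A τ * phi (τ - Finsupp.single s 1) D := by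
            rw [hS', Finset.sum_image hinj]
            apply Finset.sum_congr rfl
            intro τ hτ
            have hle := (Finset.mem_filter.mp hτ).2
            have h1 : (τ - Finsupp.single s 1 : σ →₀ ℕ) + Finsupp.single s 1 = τ :=
              tsub_add_cancel_of_le hle
            have h2 : (τ - Finsupp.single s 1 : σ →₀ ℕ) s + 1 = τ s := by
              rw [Finsupp.tsub_apply, Finsupp.single_eq_same]
              have : 1 ≤ τ s := Finsupp.single_le_iff.mp hle
              omega
            simp only [hA']
            rw [h1, h2]
          have hfull : ∑ τ ∈ Tf, (τ s : ℂ) * A τ * phi (τ - Finsupp.single s 1) D =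
              ∑ τ ∈ S, (τ s : ℂ) * A τ * phi (τ - Finsupp.single s 1) D := by
            rw [hTf]
            apply Finset.sum_filter_of_ne
            intro τ _ hne
            rw [Finsupp.single_le_iff]
            by_contra hc
            apply hne
            have : τ s = 0 := by omega
            rw [this]
            simp
          have hdiff : ∑ τ ∈ S, A τ * phi τ (D + Finsupp.single s 1)
              - ∑ τ ∈ S, A τ * phi τ D
              = ∑ τ ∈ S, (τ s : ℂ) * A τ * phi (τ - Finsupp.single s 1) D := by
            rw [← Finset.sum_sub_distrib]
            apply Finset.sum_congr rfl
            intro τ _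
            rw [phi_step]
            ring
          rw [hreix, hfull, ← hdiff, hvan D hD,
            hvan (D + Finsupp.single s 1) (le_trans hD le_self_add), sub_zero]
        have hA'zero := IH (n - 1) (by omega) S' A' base hmeas hsupp' hvan'
        intro τ hτle
        have := hA'zero (τ - Finsupp.single s 1)
        simp only [hA'] at this
        rw [tsub_add_cancel_of_le hτle] at this
        have hcast : (((τ - Finsupp.single s 1 : σ →₀ ℕ) s + 1 : ℕ) : ℂ) ≠ 0 :=
          Nat.cast_ne_zero.mpr (Nat.succ_ne_zero _)
        exact (mul_eq_zero.mp this).resolve_left hcast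
      -- second recursion : support shrinks to the complement
      set S'' := S.filter (fun ν => ¬ Finsupp.single s 1 ≤ ν) with hS''
      have hsupp'' : ∀ ν, A ν ≠ 0 → ν ∈ S'' := by
        intro ν hν
        rw [hS'', Finset.mem_filter]
        exact ⟨hsupp _ hν, fun hle => hν (hupper _ hle)⟩
      have hvan'' : ∀ D, base ≤ D → ∑ ν ∈ S'', A ν * phi ν D = 0 := by
        intro D hD
        rw [← hvan D hD]
        apply Finset.sum_subset (Finset.filter_subset _ _)
        intro x hx hnx
        have : Finsupp.single s 1 ≤ x := by
          by_contra hc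
          exact hnx (Finset.mem_filter.mpr ⟨hx, hc⟩)
        rw [hupper _ this, zero_mul]
      have hmeas'' : ∑ ν ∈ S'', wt ν ≤ n - 1 := by
        have hsub : S'' ⊆ S.erase τ0 := by
          intro x hx
          rw [Finset.mem_erase]
          have hx' := Finset.mem_filter.mp hx
          refine ⟨fun h => hx'.2 ?_, hx'.1⟩
          rw [h]
          exact Finsupp.single_le_iff.mpr (by omega)
        have h1 : ∑ ν ∈ S'', wt ν ≤ ∑ ν ∈ S.erase τ0, wt ν :=
          Finset.sum_le_sum_of_subset hsub
        have h2 : ∑ ν ∈ S.erase τ0, wt ν + wt τ0 = ∑ ν ∈ S, wt ν := by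
          rw [Finset.sum_erase_add S _ hτ0S]
        omega
      exact IH (n - 1) (by
        have : 1 ≤ ∑ ν ∈ S, wt ν := le_trans hwtτ0 (Finset.single_le_sum
          (f := fun ν => wt ν) (fun _ _ => Nat.zero_le _) hτ0S)
        omega) S'' A base hmeas'' hsupp'' hvan'' ν0

end JetAux

namespace JetAux

variable {k r l : ℕ}

def Van (u : MixJet k r l) : Prop :=
  ∀ F : Fin r → MvPowerSeries (Fin k) ℂ,
    (∀ i, MvPowerSeries.constantCoeff (F i) = 0) → jetEval u F = 0

lemma wt_pos {σ' : Type*} {τ : σ' →₀ ℕ} (h : τ ≠ 0) : 1 ≤ wt τ :=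
  Nat.pos_of_ne_zero (fun h0 => h (wt_eq_zero h0))

lemma sum_JIdx_split {M : Type*} [AddCommMonoid M] (g : (Fin k →₀ ℕ) → M) :
    ∑ ν : JIdx k l, g ν.1 = g 0 + ∑ h : HatIdx k l, g h.1 := by
  classical
  rw [← Finset.sum_filter_add_sum_filter_not Finset.univ (fun ν : JIdx k l => ν.1 = 0)]
  congr 1
  · have hz : ((0 : Fin k →₀ ℕ).sum fun _ e => e) ≤ l := by simp
    have hsing : Finset.univ.filter (fun ν : JIdx k l => ν.1 = 0) = {⟨0, hz⟩} := by
      apply Finset.eq_singleton_iff_unique_mem.mpr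
      refine ⟨Finset.mem_filter.mpr ⟨Finset.mem_univ _, rfl⟩, fun x hx => ?_⟩
      exact Subtype.ext (Finset.mem_filter.mp hx).2
    rw [hsing, Finset.sum_singleton]
  · apply Finset.sum_bij (fun (ν : JIdx k l) (hν : ν ∈ Finset.univ.filter
      (fun ν : JIdx k l => ¬ ν.1 = 0)) =>
        (⟨ν.1, ⟨wt_def ν.1 ▸ wt_pos (Finset.mem_filter.mp hν).2, ν.2⟩⟩ : HatIdx k l))
    · intro a ha; exact Finset.mem_univ _
    · intro a₁ h₁ a₂ h₂ heq
      exact Subtype.ext (by simpa using congrArg Subtype.val heq)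
    · intro b _
      have hb0 : ¬ b.1 = 0 := by
        intro h0
        have := b.2.1
        rw [h0] at this
        simp at this
      exact ⟨⟨b.1, b.2.2⟩, Finset.mem_filter.mpr ⟨Finset.mem_univ _, hb0⟩, Subtype.ext rfl⟩
    · intro a ha; rfl

lemma van_coeff_B (hk : 0 < k) {u : MixJet k r l} (hu : Van u)
    {F : Fin r → MvPowerSeries (Fin k) ℂ}
    (hF : ∀ i, MvPowerSeries.constantCoeff (F i) = 0) (i0 : Fin r)
    (B : JIdx k l → MvPowerSeries (Fin k) ℂ)
    (hB : ∀ ν : JIdx k l, B ν = if h1 : 1 ≤ ((ν.1.sum fun _ e => e)) then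
        jetEval (MvPolynomial.pderiv ((⟨ν.1, h1, ν.2⟩, i0) : HatIdx k l × Fin r) u) F
      else jetEval (D0 i0 u) F) :
    ∀ (μ0 : JIdx k l) (e : Fin k →₀ ℕ), MvPowerSeries.coeff e (B μ0) = 0 := by
  classical
  intro μ0 e
  set n0 : ℕ := wt e + 2 * l + wt μ0.1 + l + 1 with hn0
  set base : Fin k →₀ ℕ :=
    μ0.1 + Finsupp.equivFunOnFinite.symm (fun _ : Fin k => n0) with hbase
  set Aval : (Fin k →₀ ℕ) → ℂ := fun τ =>
    if hτ : (τ.sum fun _ e => e) ≤ l then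
      (if μ0.1 ≤ e + τ then MvPowerSeries.coeff (e + τ - μ0.1) (B ⟨τ, hτ⟩) else 0)
    else 0 with hAval
  set S := (Finset.univ : Finset (JIdx k l)).image Subtype.val with hS
  have hsupp : ∀ τ, Aval τ ≠ 0 → τ ∈ S := by
    intro τ h
    rw [hS, Finset.mem_image]
    by_cases hτ : (τ.sum fun _ e => e) ≤ l
    · exact ⟨⟨τ, hτ⟩, Finset.mem_univ _, rfl⟩
    · exfalso
      apply h
      simp only [hAval]
      rw [dif_neg hτ]
  have hμl : ∀ s, μ0.1 s ≤ l := fun s =>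
    le_trans (le_wt s μ0.1) (le_trans le_rfl μ0.2)
  have hvan : ∀ D, base ≤ D → ∑ τ ∈ S, Aval τ * phi τ D = 0 := by
    intro D hD
    have hDcoord : ∀ s, μ0.1 s + n0 ≤ D s := by
      intro s
      have := Finsupp.le_def.mp hD s
      rwa [hbase, Finsupp.add_apply, Finsupp.coe_equivFunOnFinite_symm] at this
    have hDμ : μ0.1 ≤ D := Finsupp.le_def.mpr fun s => by have := hDcoord s; omega
    set s0 : Fin k := ⟨0, hk⟩
    have hwtD : n0 ≤ wt D := le_trans (by have := hDcoord s0; omega) (le_wt s0 D)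
    have hwtμ : wt μ0.1 ≤ wt D := by omega
    have hcl : l + 1 ≤ wt D := by omega
    set H := fun i : Fin r => if i = i0 then (MvPowerSeries.monomial D (1 : ℂ)) else 0
      with hHdef
    have hHi0 : H i0 = MvPowerSeries.monomial D 1 := by
      simp [hHdef]
    have hHne : ∀ i, i ≠ i0 → H i = 0 := fun i hi => by
      simp only [hHdef]
      rw [if_neg hi]
    have hHord : ∀ i, ordGE (wt D) (H i) := by
      intro i
      by_cases h : i = i0
      · subst h; rw [hHi0]; exact ordGE_monomial D 1
      · rw [hHne i h]; exact ordGE_zero _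
    have hD0 : D ≠ 0 := by
      intro h
      have := hDcoord s0
      rw [h] at this
      simp only [Finsupp.coe_zero, Pi.zero_apply] at this
      omega
    have hFH0 : ∀ i, MvPowerSeries.constantCoeff (F i + H i) = 0 := by
      intro i
      rw [map_add, hF i, zero_add]
      by_cases h : i = i0
      · subst h
        rw [hHi0, ← MvPowerSeries.coeff_zero_eq_constantCoeff_apply,
          MvPowerSeries.coeff_monomial, if_neg (by exact fun hc => hD0 hc.symm)]
      · rw [hHne i h, map_zero]
    have h1 := hu (fun i => F i + H i) hFH0
    have h2 := hu F hF
    have h3 := main_linearize hcl hF hHord u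
    rw [h1, h2] at h3
    have hLord : ordGE (2 * (wt D - l)) (linTerm u F H) := by
      have := ordGE_neg h3
      simpa using this
    set E := e + (D - μ0.1) with hE
    have hwtE : wt E < 2 * (wt D - l) := by
      rw [hE, wt_add, wt_tsub hDμ]
      omega
    have hcoeffE := hLord E hwtE
    -- compute the coefficient of the linear term
    have hlin : linTerm u F H =
        (∑ h : HatIdx k l, phi h.1 D •
          (jetEval (MvPolynomial.pderiv ((h, i0) : HatIdx k l × Fin r) u) F *
            MvPowerSeries.monomial (D - h.1) 1))
        + jetEval (D0 i0 u) F * MvPowerSeries.monomial D 1 := by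
      unfold linTerm
      congr 1
      · rw [Fintype.sum_prod_type]
        apply Finset.sum_congr rfl
        intro h _
        have hinner : ∀ i : Fin r,
            jetEval (MvPolynomial.pderiv ((h, i) : HatIdx k l × Fin r) u) F *
              iterD (h.1 : Fin k →₀ ℕ) (H i) =
            if i = i0 then phi h.1 D •
              (jetEval (MvPolynomial.pderiv ((h, i0) : HatIdx k l × Fin r) u) F *
                MvPowerSeries.monomial (D - h.1) 1) else 0 := by
          intro i
          by_cases hi : i = i0
          · subst hi
            rw [if_pos rfl, hHi0, iterD_monomial_one, mul_smul_comm]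
            congr 1
            rw [phi, Nat.cast_prod]
          · rw [if_neg hi, hHne i hi, iterD_zero, mul_zero]
        rw [Finset.sum_congr rfl (fun i _ => hinner i), Finset.sum_ite_eq' Finset.univ i0,
          if_pos (Finset.mem_univ i0)]
      · have hinner : ∀ i : Fin r, jetEval (D0 i u) F * H i =
            if i = i0 then jetEval (D0 i u) F * MvPowerSeries.monomial D 1 else 0 := by
          intro i
          by_cases hi : i = i0
          · subst hi
            rw [if_pos rfl, hHi0]
          · rw [if_neg hi, hHne i hi, mul_zero]
        rw [Finset.sum_congr rfl (fun i _ => hinner i), Finset.sum_ite_eq' Finset.univ i0,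
          if_pos (Finset.mem_univ i0)]
    -- pointwise arithmetic facts
    have harith : ∀ (ht : Fin k →₀ ℕ), (∀ s, ht s ≤ l) →
        ((D - ht ≤ E) ↔ (μ0.1 ≤ e + ht)) ∧
          (μ0.1 ≤ e + ht → E - (D - ht) = e + ht - μ0.1) := by
      intro ht hht
      have hkey : ∀ s, (D - ht : Fin k →₀ ℕ) s = D s - ht s ∧
          E s = e s + (D s - μ0.1 s) := by
        intro s
        constructor
        · rw [Finsupp.tsub_apply]
        · rw [hE, Finsupp.add_apply, Finsupp.tsub_apply]
      constructor
      · constructor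
        · intro hle
          apply Finsupp.le_def.mpr
          intro s
          have h1 := Finsupp.le_def.mp hle s
          obtain ⟨ha, hb⟩ := hkey s
          rw [ha, hb] at h1
          have := hDcoord s
          have := hht s
          rw [Finsupp.add_apply]
          omega
        · intro hle
          apply Finsupp.le_def.mpr
          intro s
          have h1 := Finsupp.le_def.mp hle s
          obtain ⟨ha, hb⟩ := hkey s
          rw [ha, hb]
          rw [Finsupp.add_apply] at h1
          have := hDcoord s
          have := hht s
          omega
      · intro hle
        ext s
        have h1 := Finsupp.le_def.mp hle s
        rw [Finsupp.add_apply] at h1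
        obtain ⟨ha, hb⟩ := hkey s
        have hL : (E - (D - ht)) s = E s - (D s - ht s) := by
          rw [Finsupp.tsub_apply, Finsupp.tsub_apply]
        have hR : (e + ht - μ0.1) s = e s + ht s - μ0.1 s := by
          rw [Finsupp.tsub_apply, Finsupp.add_apply]
        rw [hL, hR, hb]
        have := hDcoord s
        have := hht s
        have := hμl s
        omega
    -- per-term identification for hat indices
    have hhat : ∀ h : HatIdx k l,
        MvPowerSeries.coeff E (phi h.1 D •
          (jetEval (MvPolynomial.pderiv ((h, i0) : HatIdx k l × Fin r) u) F *
            MvPowerSeries.monomial (D - h.1) 1)) = Aval h.1 * phi h.1 D := by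
      intro h
      have hht : ∀ s, h.1 s ≤ l := fun s => le_trans (le_wt s h.1) h.2.2
      obtain ⟨hiff, heqidx⟩ := harith h.1 hht
      rw [map_smul, smul_eq_mul, mul_comm]
      congr 1
      rw [MvPowerSeries.coeff_mul_monomial]
      have hBval : B ⟨h.1, h.2.2⟩ =
          jetEval (MvPolynomial.pderiv ((h, i0) : HatIdx k l × Fin r) u) F := by
        rw [hB ⟨h.1, h.2.2⟩, dif_pos h.2.1]
      simp only [hAval]
      rw [dif_pos h.2.2, hBval]
      by_cases hcond : μ0.1 ≤ e + h.1
      · rw [if_pos (hiff.mpr hcond), if_pos hcond, heqidx hcond, mul_one]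
      · rw [if_neg (fun hc => hcond (hiff.mp hc)), if_neg hcond]
    -- the zero-index term
    have hzero : MvPowerSeries.coeff E
        (jetEval (D0 i0 u) F * MvPowerSeries.monomial D 1) = Aval 0 * phi 0 D := by
      obtain ⟨hiff, heqidx⟩ := harith 0 (fun s => Nat.zero_le _)
      rw [phi_zero, mul_one, MvPowerSeries.coeff_mul_monomial]
      have hBval : B ⟨0, by simp⟩ = jetEval (D0 i0 u) F := by
        rw [hB ⟨0, by simp⟩, dif_neg (by simp)]
      simp only [hAval]
      rw [dif_pos (by simp : ((0 : Fin k →₀ ℕ).sum fun _ e => e) ≤ l), hBval]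
      have hD00 : (D - 0 : Fin k →₀ ℕ) = D := tsub_zero D
      rw [hD00] at hiff
      by_cases hcond : μ0.1 ≤ e + 0
      · have heq' := heqidx hcond
        rw [hD00] at heq'
        rw [if_pos (hiff.mpr hcond), if_pos hcond, heq', mul_one]
      · rw [if_neg (fun hc => hcond (hiff.mp hc)), if_neg hcond]
    -- assemble
    have hSsum : ∑ τ ∈ S, Aval τ * phi τ D = ∑ ν : JIdx k l, Aval ν.1 * phi ν.1 D := by
      rw [hS]
      rw [Finset.sum_image (fun x _ y _ h => Subtype.ext h)]
    rw [hSsum, sum_JIdx_split (fun τ => Aval τ * phi τ D), ← hzero]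
    have : ∑ h : HatIdx k l, Aval h.1 * phi h.1 D =
        ∑ h : HatIdx k l, MvPowerSeries.coeff E (phi h.1 D •
          (jetEval (MvPolynomial.pderiv ((h, i0) : HatIdx k l × Fin r) u) F *
            MvPowerSeries.monomial (D - h.1) 1)) :=
      Finset.sum_congr rfl fun h _ => (hhat h).symm
    rw [this, ← map_sum, ← map_add,
      add_comm (jetEval (D0 i0 u) F * MvPowerSeries.monomial D 1), ← hlin]
    exact hcoeffE
  have hall := LI_aux (∑ ν ∈ S, wt ν) S Aval base le_rfl hsupp hvan μ0.1
  simp only [hAval] at hall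
  rw [dif_pos μ0.2, if_pos (le_add_self : μ0.1 ≤ e + μ0.1), add_tsub_cancel_right] at hall
  rwa [show (⟨μ0.1, μ0.2⟩ : JIdx k l) = μ0 from Subtype.ext rfl] at hall

end JetAux

namespace JetAux

variable {k r l : ℕ}

lemma van_pderiv (hk : 0 < k) {u : MixJet k r l} (hu : Van u)
    (q : HatIdx k l × Fin r) : Van (MvPolynomial.pderiv q u) := by
  intro F hF
  apply MvPowerSeries.ext
  intro e
  rw [map_zero]
  set B : JIdx k l → MvPowerSeries (Fin k) ℂ := fun ν =>
    if h1 : 1 ≤ ((ν.1.sum fun _ e => e)) then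
      jetEval (MvPolynomial.pderiv ((⟨ν.1, h1, ν.2⟩, q.2) : HatIdx k l × Fin r) u) F
    else jetEval (D0 q.2 u) F with hBdef
  have hB : ∀ ν : JIdx k l, B ν = if h1 : 1 ≤ ((ν.1.sum fun _ e => e)) then
      jetEval (MvPolynomial.pderiv ((⟨ν.1, h1, ν.2⟩, q.2) : HatIdx k l × Fin r) u) F
    else jetEval (D0 q.2 u) F := fun ν => rfl
  have hmain := van_coeff_B hk hu hF q.2 B hB ⟨q.1.1, q.1.2.2⟩ e
  have hBq : B ⟨q.1.1, q.1.2.2⟩ = jetEval (MvPolynomial.pderiv q u) F := by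
    simp only [hBdef]
    rw [dif_pos q.1.2.1]
  rwa [hBq] at hmain

lemma van_D0 (hk : 0 < k) {u : MixJet k r l} (hu : Van u) (i : Fin r) :
    Van (D0 i u) := by
  intro F hF
  apply MvPowerSeries.ext
  intro e
  rw [map_zero]
  set B : JIdx k l → MvPowerSeries (Fin k) ℂ := fun ν =>
    if h1 : 1 ≤ ((ν.1.sum fun _ e => e)) then
      jetEval (MvPolynomial.pderiv ((⟨ν.1, h1, ν.2⟩, i) : HatIdx k l × Fin r) u) F
    else jetEval (D0 i u) F with hBdef
  have hmain := van_coeff_B hk hu hF i B (fun ν => rfl) ⟨0, by simp⟩ e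
  have hBq : B ⟨0, by simp⟩ = jetEval (D0 i u) F := by
    simp only [hBdef]
    rw [dif_neg (by simp)]
  rwa [hBq] at hmain

lemma jetEval_zeroF (u : MixJet k r l) :
    jetEval u (fun _ => (0 : MvPowerSeries (Fin k) ℂ)) =
      MvPowerSeries.C
        (MvPowerSeries.constantCoeff (MvPolynomial.coeff 0 u)) := by
  classical
  rw [jetEval_superset u _ (T := insert 0 u.support) (Finset.subset_insert _ _)]
  rw [Finset.sum_eq_single_of_mem 0 (Finset.mem_insert_self _ _) ?side]
  · rw [Finsupp.prod_zero_index, mul_one, fsubst_zero_family]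
  case side =>
    intro m _ hm
    have hex : ∃ q, m q ≠ 0 := by
      by_contra hc
      push_neg at hc
      exact hm (Finsupp.ext hc)
    obtain ⟨q, hq⟩ := hex
    have hprod : (m.prod fun p e => (iterD (p.1.1 : Fin k →₀ ℕ)
        ((fun _ => (0 : MvPowerSeries (Fin k) ℂ)) p.2)) ^ e) = 0 := by
      apply Finset.prod_eq_zero (Finsupp.mem_support_iff.mpr hq)
      show (iterD (q.1.1 : Fin k →₀ ℕ) (0 : MvPowerSeries (Fin k) ℂ)) ^ m q = 0
      rw [iterD_zero, zero_pow hq]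
    rw [hprod, mul_zero]

lemma wt_single {σ' : Type*} (q : σ') : wt (Finsupp.single q 1) = 1 := by
  rw [wt_def, Finsupp.sum_single_index]
  rfl

lemma van_all_coeff (hk : 0 < k) : ∀ (n : ℕ) (u : MixJet k r l), Van u →
    ∀ (m : (HatIdx k l × Fin r) →₀ ℕ) (d : Fin r →₀ ℕ), wt m + wt d = n →
      MvPowerSeries.coeff d (MvPolynomial.coeff m u) = 0 := by
  intro n
  induction n using Nat.strong_induction_on with
  | _ n IH =>
    intro u hu m d hn
    by_cases hm : m = 0
    · subst hm
      by_cases hd : d = 0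
      · subst hd
        have h0 := hu (fun _ => 0) (fun i => map_zero _)
        rw [jetEval_zeroF] at h0
        have h1 := congrArg (MvPowerSeries.coeff (0 : Fin k →₀ ℕ)) h0
        rw [map_zero, MvPowerSeries.coeff_zero_C] at h1
        rw [MvPowerSeries.coeff_zero_eq_constantCoeff]
        exact h1
      · obtain ⟨i, hi⟩ : ∃ i, d i ≠ 0 := by
          by_contra hc
          push_neg at hc
          exact hd (Finsupp.ext hc)
        have hdi : Finsupp.single i 1 ≤ d := Finsupp.single_le_iff.mpr (by omega)
        have hn' : wt d = n := by
          rw [wt_zero, zero_add] at hn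
          exact hn
        have hwt : wt (0 : (HatIdx k l × Fin r) →₀ ℕ) + wt (d - Finsupp.single i 1)
            = n - 1 := by
          rw [wt_zero, wt_tsub hdi, wt_single, zero_add]
          omega
        have hnpos : 1 ≤ n := by
          have := wt_pos hd
          omega
        have hIH := IH (n - 1) (by omega) (D0 i u) (van_D0 hk hu i) 0
          (d - Finsupp.single i 1) hwt
        rw [coeff_D0, coeff_iterD_single, tsub_add_cancel_of_le hdi] at hIH
        have hdi' : ((d - Finsupp.single i 1 : Fin r →₀ ℕ)) i + 1 = d i := by
          rw [Finsupp.tsub_apply, Finsupp.single_eq_same]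
          omega
        rw [hdi'] at hIH
        have hne : ((d i : ℕ) : ℂ) ≠ 0 := Nat.cast_ne_zero.mpr hi
        exact (mul_eq_zero.mp hIH).resolve_left hne
    · obtain ⟨q, hq⟩ : ∃ q, m q ≠ 0 := by
        by_contra hc
        push_neg at hc
        exact hm (Finsupp.ext hc)
      have hmq : Finsupp.single q 1 ≤ m := Finsupp.single_le_iff.mpr (by omega)
      have hwtm := wt_pos hm
      have hwt : wt (m - Finsupp.single q 1) + wt d = n - 1 := by
        rw [wt_tsub hmq, wt_single]
        omega
      have hnpos : 1 ≤ n := by omega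
      have hIH := IH (n - 1) (by omega) (MvPolynomial.pderiv q u)
        (van_pderiv hk hu q) (m - Finsupp.single q 1) d hwt
      rw [coeff_pderiv, tsub_add_cancel_of_le hmq] at hIH
      have hmq' : ((m - Finsupp.single q 1 : (HatIdx k l × Fin r) →₀ ℕ)) q + 1 = m q := by
        rw [Finsupp.tsub_apply, Finsupp.single_eq_same]
        omega
      rw [hmq'] at hIH
      rw [map_nsmul] at hIH
      have hne : ((m q : ℕ) : ℂ) ≠ 0 := Nat.cast_ne_zero.mpr hq
      have : ((m q : ℕ) : ℂ) * MvPowerSeries.coeff d (MvPolynomial.coeff m u) = 0 := by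
        rw [← nsmul_eq_mul]
        exact hIH
      exact (mul_eq_zero.mp this).resolve_left hne

end JetAux


/-- Uniqueness lemma for jet-space functions: if `u ∈ ℂ[[Λ₀]][Λ̂]` vanishes on the
`l`-jet `j^l_x F` of every formal map `F : (ℂ^k,0) → (ℂ^r,0)`, then `u = 0`. -/
theorem jet_eval_eq_zero_unique {k r l : ℕ} (hk : 0 < k) (hr : 0 < r)
    (u : MixJet k r l)
    (hu : ∀ F : Fin r → MvPowerSeries (Fin k) ℂ,
      (∀ i, MvPowerSeries.constantCoeff (F i) = 0) → jetEval u F = 0) :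
    u = 0 := by
  apply MvPolynomial.ext
  intro m
  rw [MvPolynomial.coeff_zero]
  apply MvPowerSeries.ext
  intro d
  rw [map_zero]
  exact JetAux.van_all_coeff hk (JetAux.wt m + JetAux.wt d) u hu m d rfl
end

section
/- Let $R(x,y) = (R_1(x,y),\ldots,R_r(x,y))$ be an $r$-tuple of formal power series in $(x,y) \in \mathbb{C}^q \times \mathbb{C}^r$, and let $h^0 : (\mathbb{C}^q,0) \to (\mathbb{C}^r,0)$ be a formal map such that $R(x,h^0(x)) = 0$ and $\det\left(\frac{\partial R_i}{\partial y_j}(x,h^0(x))\right)_{1 \le i,j \le r} \neq 0$ as a formal power series in $x$. Then there exists a positive integer $k$ (depending on $h^0$) such that any formal map $h : (\mathbb{C}^q,0) \to (\mathbb{C}^r,0)$ satisfying $R(x,h(x)) = 0$ and agreeing with $h^0$ up to order $k$ (i.e., $j^k_0 h = j^k_0 h^0$) must equal $h^0$. -/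
open MvPowerSeries

/-- The formal partial derivative `∂f/∂x_s` of a formal power series. -/
noncomputable def pd {σ : Type*} (s : σ) (f : MvPowerSeries σ ℂ) : MvPowerSeries σ ℂ :=
  fun m => ((m s : ℂ) + 1) * MvPowerSeries.coeff (m + Finsupp.single s 1) f

/-- A formal power series is convergent if its coefficients grow at most
geometrically. -/
def Convergent {σ : Type*} (f : MvPowerSeries σ ℂ) : Prop :=
  ∃ C r : ℝ, 0 < r ∧ ∀ m : σ →₀ ℕ,
    ‖MvPowerSeries.coeff m f‖ ≤ C * r ^ (m.sum fun _ e => e)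

namespace FDaux

variable {τ : Type*}

def deg (m : τ →₀ ℕ) : ℕ := m.sum fun _ x => x

lemma deg_add (u v : τ →₀ ℕ) : deg (u + v) = deg u + deg v :=
  Finsupp.sum_add_index' (fun _ => rfl) (fun _ _ _ => rfl)

lemma deg_eq_zero {u : τ →₀ ℕ} (h : deg u = 0) : u = 0 := by
  ext s
  by_cases hs : s ∈ u.support
  · exact absurd (Finset.sum_eq_zero_iff.mp h s hs) (Finsupp.mem_support_iff.mp hs)
  · simpa using Finsupp.notMem_support_iff.mp hs

lemma apply_le_deg (u : τ →₀ ℕ) (s : τ) : u s ≤ deg u := by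
  by_cases hs : s ∈ u.support
  · exact Finset.single_le_sum (fun _ _ => Nat.zero_le _) hs
  · simp [Finsupp.notMem_support_iff.mp hs]

/-- The ideal of power series whose coefficients vanish below total degree `c`. -/
noncomputable def K (c : ℕ) : Ideal (MvPowerSeries τ ℂ) where
  carrier := {f | ∀ e, deg e < c → MvPowerSeries.coeff e f = 0}
  add_mem' := fun ha hb e he => by rw [map_add, ha e he, hb e he, add_zero]
  zero_mem' := fun e he => by simp
  smul_mem' := fun g f hf e he => by
    classical
    rw [smul_eq_mul, MvPowerSeries.coeff_mul]
    refine Finset.sum_eq_zero fun p hp => ?_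
    rw [Finset.HasAntidiagonal.mem_antidiagonal] at hp
    have : deg p.1 + deg p.2 = deg e := by rw [← deg_add, hp]
    rw [hf p.2 (by omega), mul_zero]

lemma mem_K {c : ℕ} {f : MvPowerSeries τ ℂ} :
    f ∈ (K c : Ideal (MvPowerSeries τ ℂ)) ↔ ∀ e, deg e < c → MvPowerSeries.coeff e f = 0 :=
  Iff.rfl

lemma K_mono {c d : ℕ} (h : c ≤ d) : (K d : Ideal (MvPowerSeries τ ℂ)) ≤ K c :=
  fun _ hf e he => hf e (lt_of_lt_of_le he h)

lemma K_mul_mem {c d : ℕ} {f g : MvPowerSeries τ ℂ} (hf : f ∈ K c) (hg : g ∈ K d) :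
    f * g ∈ (K (c + d) : Ideal (MvPowerSeries τ ℂ)) := by
  classical
  intro e he
  rw [MvPowerSeries.coeff_mul]
  refine Finset.sum_eq_zero fun p hp => ?_
  rw [Finset.HasAntidiagonal.mem_antidiagonal] at hp
  have hdeg : deg p.1 + deg p.2 = deg e := by rw [← deg_add, hp]
  rcases lt_or_ge (deg p.1) c with h1 | h1
  · rw [hf p.1 h1, zero_mul]
  · rw [hg p.2 (by omega), mul_zero]

lemma mem_K_one {f : MvPowerSeries τ ℂ} (hf : MvPowerSeries.constantCoeff f = 0) :
    f ∈ (K 1 : Ideal (MvPowerSeries τ ℂ)) := by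
  intro e he
  have : e = 0 := deg_eq_zero (by omega)
  rw [this, MvPowerSeries.coeff_zero_eq_constantCoeff]
  exact hf

lemma pow_mem_K {f : MvPowerSeries τ ℂ} (hf : f ∈ (K 1 : Ideal (MvPowerSeries τ ℂ))) (b : ℕ) :
    f ^ b ∈ (K b : Ideal (MvPowerSeries τ ℂ)) := by
  induction b with
  | zero => intro e he; omega
  | succ b ih => rw [pow_succ]; exact K_mul_mem ih hf

lemma prod_mem_K {σ : Type*} (t : Finset σ) (f : σ → MvPowerSeries τ ℂ) (w : σ → ℕ)
    (h : ∀ s ∈ t, f s ∈ (K (w s) : Ideal (MvPowerSeries τ ℂ))) :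
    (∏ s ∈ t, f s) ∈ (K (∑ s ∈ t, w s) : Ideal (MvPowerSeries τ ℂ)) := by
  classical
  induction t using Finset.induction with
  | empty => intro e he; simp at he
  | insert _ _ hs ih =>
      rw [Finset.prod_insert hs, Finset.sum_insert hs]
      exact K_mul_mem (h _ (Finset.mem_insert_self _ _))
        (ih fun s hs' => h s (Finset.mem_insert_of_mem hs'))

variable {σ : Type*} [Fintype σ] [DecidableEq σ]

lemma prod_pow_mem_K (a : σ → MvPowerSeries τ ℂ)
    (ha : ∀ s, MvPowerSeries.constantCoeff (a s) = 0) (m : σ →₀ ℕ) :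
    (∏ s : σ, a s ^ m s) ∈ (K (deg m) : Ideal (MvPowerSeries τ ℂ)) := by
  have hdeg : deg m = ∑ s : σ, m s := Finsupp.sum_fintype _ _ (fun _ => rfl)
  rw [hdeg]
  exact prod_mem_K Finset.univ _ _ fun s _ => pow_mem_K (mem_K_one (ha s)) (m s)

lemma coeff_fsubst (a : σ → MvPowerSeries τ ℂ)
    (ha : ∀ s, MvPowerSeries.constantCoeff (a s) = 0) (f : MvPowerSeries σ ℂ)
    (e : τ →₀ ℕ) (T : Finset (σ →₀ ℕ))
    (hT : Finset.Iic (Finsupp.equivFunOnFinite.symm fun _ => deg e) ⊆ T) :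
    MvPowerSeries.coeff e (fsubst a f)
      = ∑ m ∈ T, MvPowerSeries.coeff m f * MvPowerSeries.coeff e (∏ s : σ, a s ^ m s) := by
  have h1 : MvPowerSeries.coeff e (fsubst a f)
      = ∑ m ∈ Finset.Iic (Finsupp.equivFunOnFinite.symm fun _ => deg e),
          MvPowerSeries.coeff m f * MvPowerSeries.coeff e (∏ s : σ, a s ^ m s) := by
    show MvPowerSeries.coeff e (∑ m ∈ _, _) = _
    rw [map_sum]
    exact Finset.sum_congr rfl fun m _ => by
      rw [map_smul, smul_eq_mul]
  rw [h1]
  refine Finset.sum_subset hT fun m _ hm => ?_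
  rw [Finset.mem_Iic] at hm
  have : ∃ s, ¬ m s ≤ deg e := by
    by_contra hc
    push_neg at hc
    exact hm (Finsupp.le_def.mpr fun s => by
      simpa [Finsupp.coe_equivFunOnFinite_symm] using hc s)
  obtain ⟨s, hs⟩ := this
  have hlt : deg e < deg m := lt_of_lt_of_le (by omega) (apply_le_deg m s)
  rw [prod_pow_mem_K a ha m e hlt, mul_zero]

end FDaux
namespace FDaux
variable {τ : Type*} {σ : Type*} [Fintype σ] [DecidableEq σ]

lemma sv_mem {n : ℕ} {x y : MvPowerSeries τ ℂ} (h : x - y ∈ (K n : Ideal (MvPowerSeries τ ℂ)))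
    (b : ℕ) : x ^ b - y ^ b - b • (y ^ (b - 1) * (x - y)) ∈ (K (2 * n) : Ideal (MvPowerSeries τ ℂ)) := by
  induction b with
  | zero => simpa using zero_mem _
  | succ b ih =>
      have key : x ^ (b + 1) - y ^ (b + 1) - (b + 1) • (y ^ (b + 1 - 1) * (x - y))
          = x * (x ^ b - y ^ b - b • (y ^ (b - 1) * (x - y)))
            + b • ((x - y) * (y ^ (b - 1) * (x - y))) := by
        cases b with
        | zero => simp
        | succ c =>
            simp only [Nat.add_sub_cancel, nsmul_eq_mul, Nat.cast_add, Nat.cast_one]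
            ring
      rw [key]
      refine add_mem (Ideal.mul_mem_left _ _ ih) (nsmul_mem ?_ b)
      have h2 : (x - y) * (y ^ (b - 1) * (x - y)) ∈ (K (n + n) : Ideal (MvPowerSeries τ ℂ)) :=
        K_mul_mem h (Ideal.mul_mem_left _ _ h)
      simpa [two_mul] using h2

lemma prod_pow_add (a : σ → MvPowerSeries τ ℂ) (μ ν : σ →₀ ℕ) :
    (∏ s : σ, a s ^ (μ + ν) s) = (∏ s : σ, a s ^ μ s) * ∏ s : σ, a s ^ ν s := by
  rw [← Finset.prod_mul_distrib]
  exact Finset.prod_congr rfl fun s _ => by rw [Finsupp.add_apply, pow_add]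

lemma prod_pow_single (a : σ → MvPowerSeries τ ℂ) (s0 : σ) (b : ℕ) :
    (∏ s : σ, a s ^ (Finsupp.single s0 b) s) = a s0 ^ b := by
  rw [Finset.prod_eq_single s0]
  · rw [Finsupp.single_eq_same]
  · intro s _ hs
    rw [Finsupp.single_eq_of_ne' (Ne.symm hs), pow_zero]
  · intro hs; exact absurd (Finset.mem_univ s0) hs

lemma bin (a a0 : σ → MvPowerSeries τ ℂ) {n : ℕ}
    (hε : ∀ s, a s - a0 s ∈ (K n : Ideal (MvPowerSeries τ ℂ))) (m : σ →₀ ℕ) :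
    (∏ s : σ, a s ^ m s) - (∏ s : σ, a0 s ^ m s)
      - (∑ s : σ, (m s) • ((∏ s' : σ, a0 s' ^ ((m - Finsupp.single s 1 : σ →₀ ℕ) s')) * (a s - a0 s)))
      ∈ (K (2 * n) : Ideal (MvPowerSeries τ ℂ)) := by
  induction m using Finsupp.induction with
  | zero => simpa using zero_mem _
  | single_add s0 b m hs0 hb ih =>
      have hms0 : m s0 = 0 := Finsupp.notMem_support_iff.mp hs0
      have e1 : (∏ s : σ, a s ^ (Finsupp.single s0 b + m) s)
          = a s0 ^ b * ∏ s : σ, a s ^ m s := by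
        rw [prod_pow_add, prod_pow_single]
      have e2 : (∏ s : σ, a0 s ^ (Finsupp.single s0 b + m) s)
          = a0 s0 ^ b * ∏ s : σ, a0 s ^ m s := by
        rw [prod_pow_add, prod_pow_single]
      have e3 : (∑ s : σ, ((Finsupp.single s0 b + m) s) •
            ((∏ s' : σ, a0 s' ^ ((Finsupp.single s0 b + m - Finsupp.single s 1 : σ →₀ ℕ) s')) * (a s - a0 s)))
          = b • ((a0 s0 ^ (b - 1) * ∏ s : σ, a0 s ^ m s) * (a s0 - a0 s0))
            + a0 s0 ^ b * ∑ s : σ, (m s) •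
                ((∏ s' : σ, a0 s' ^ ((m - Finsupp.single s 1 : σ →₀ ℕ) s')) * (a s - a0 s)) := by
        have split : ∀ s : σ, ((Finsupp.single s0 b + m) s) •
              ((∏ s' : σ, a0 s' ^ ((Finsupp.single s0 b + m - Finsupp.single s 1 : σ →₀ ℕ) s')) * (a s - a0 s))
            = (Finsupp.single s0 b s) •
                ((∏ s' : σ, a0 s' ^ ((Finsupp.single s0 b + m - Finsupp.single s 1 : σ →₀ ℕ) s')) * (a s - a0 s))
              + (m s) •
                ((∏ s' : σ, a0 s' ^ ((Finsupp.single s0 b + m - Finsupp.single s 1 : σ →₀ ℕ) s')) * (a s - a0 s)) := by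
          intro s; rw [Finsupp.add_apply, add_smul]
        rw [Finset.sum_congr rfl fun s _ => split s, Finset.sum_add_distrib]
        congr 1
        · rw [Finset.sum_eq_single s0]
          · have hexp : Finsupp.single s0 b + m - Finsupp.single s0 1
                = Finsupp.single s0 (b - 1) + m := by
              ext t
              rcases eq_or_ne t s0 with rfl | ht
              · simp [Finsupp.tsub_apply, hms0]
              · simp [Finsupp.tsub_apply, Finsupp.single_eq_of_ne' (Ne.symm ht)]
            rw [hexp, Finsupp.single_eq_same, prod_pow_add, prod_pow_single]
          · intro s _ hs
            rw [Finsupp.single_eq_of_ne' (Ne.symm hs), zero_smul]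
          · intro hs; exact absurd (Finset.mem_univ s0) hs
        · have hterm : ∀ s : σ, (m s) •
                ((∏ s' : σ, a0 s' ^ ((Finsupp.single s0 b + m - Finsupp.single s 1 : σ →₀ ℕ) s')) * (a s - a0 s))
              = a0 s0 ^ b *
                  ((m s) • ((∏ s' : σ, a0 s' ^ ((m - Finsupp.single s 1 : σ →₀ ℕ) s')) * (a s - a0 s))) := by
            intro s
            by_cases hss : s = s0
            · subst hss; simp [hms0]
            · have hexp : Finsupp.single s0 b + m - Finsupp.single s 1
                  = Finsupp.single s0 b + (m - Finsupp.single s 1) := by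
                ext t
                rcases eq_or_ne t s with rfl | ht
                · have h1 : s0 ≠ t := fun hc => hss hc.symm
                  simp [Finsupp.tsub_apply, Finsupp.single_eq_of_ne' h1]
                · simp [Finsupp.tsub_apply, Finsupp.single_eq_of_ne' (Ne.symm ht)]
              rw [hexp, prod_pow_add, prod_pow_single, mul_assoc, mul_smul_comm]
          rw [Finset.sum_congr rfl fun s _ => hterm s, ← Finset.mul_sum]
      rw [e1, e2, e3]
      have key : a s0 ^ b * (∏ s : σ, a s ^ m s) - a0 s0 ^ b * (∏ s : σ, a0 s ^ m s)
            - (b • ((a0 s0 ^ (b - 1) * ∏ s : σ, a0 s ^ m s) * (a s0 - a0 s0))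
              + a0 s0 ^ b * ∑ s : σ, (m s) •
                  ((∏ s' : σ, a0 s' ^ ((m - Finsupp.single s 1 : σ →₀ ℕ) s')) * (a s - a0 s)))
          = a s0 ^ b * ((∏ s : σ, a s ^ m s) - (∏ s : σ, a0 s ^ m s)
              - ∑ s : σ, (m s) • ((∏ s' : σ, a0 s' ^ ((m - Finsupp.single s 1 : σ →₀ ℕ) s')) * (a s - a0 s)))
            + (a s0 ^ b - a0 s0 ^ b - b • (a0 s0 ^ (b - 1) * (a s0 - a0 s0)))
                * (∏ s : σ, a0 s ^ m s)
            + (a s0 ^ b - a0 s0 ^ b - b • (a0 s0 ^ (b - 1) * (a s0 - a0 s0)))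
                * ∑ s : σ, (m s) • ((∏ s' : σ, a0 s' ^ ((m - Finsupp.single s 1 : σ →₀ ℕ) s')) * (a s - a0 s))
            + (b • (a0 s0 ^ (b - 1) * (a s0 - a0 s0)))
                * ∑ s : σ, (m s) • ((∏ s' : σ, a0 s' ^ ((m - Finsupp.single s 1 : σ →₀ ℕ) s')) * (a s - a0 s)) := by
        simp only [nsmul_eq_mul]
        ring
      rw [key]
      have hsv := sv_mem (hε s0) b
      have hLmem : (∑ s : σ, (m s) •
            ((∏ s' : σ, a0 s' ^ ((m - Finsupp.single s 1 : σ →₀ ℕ) s')) * (a s - a0 s)))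
          ∈ (K n : Ideal (MvPowerSeries τ ℂ)) := by
        refine Submodule.sum_mem _ fun s _ => ?_
        exact nsmul_mem (Ideal.mul_mem_left _ _ (hε s)) _
      refine add_mem (add_mem (add_mem ?_ ?_) ?_) ?_
      · exact Ideal.mul_mem_left _ _ ih
      · exact Ideal.mul_mem_right _ _ hsv
      · exact Ideal.mul_mem_right _ _ hsv
      · have h1 : (a0 s0 ^ (b - 1) * (a s0 - a0 s0)) ∈ (K n : Ideal (MvPowerSeries τ ℂ)) :=
          Ideal.mul_mem_left _ _ (hε s0)
        have h2 := K_mul_mem h1 hLmem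
        rw [smul_mul_assoc]
        exact nsmul_mem (by simpa [two_mul] using h2) b


lemma mem_T_iff {N : ℕ} {m : σ →₀ ℕ} :
    m ∈ Finset.Iic (Finsupp.equivFunOnFinite.symm fun _ => N) ↔ ∀ t, m t ≤ N := by
  rw [Finset.mem_Iic, Finsupp.le_def]
  constructor
  · intro h t; simpa [Finsupp.coe_equivFunOnFinite_symm] using h t
  · intro h t; simpa [Finsupp.coe_equivFunOnFinite_symm] using h t

lemma coeff_pd (s : σ) (f : MvPowerSeries σ ℂ) (μ : σ →₀ ℕ) :
    MvPowerSeries.coeff μ (pd s f)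
      = ((μ s : ℂ) + 1) * MvPowerSeries.coeff (μ + Finsupp.single s 1) f := rfl

lemma match_lemma [DecidableEq τ] (a0 : σ → MvPowerSeries τ ℂ)
    (ha0 : ∀ s, MvPowerSeries.constantCoeff (a0 s) = 0)
    (f : MvPowerSeries σ ℂ) (s : σ) (ε : MvPowerSeries τ ℂ)
    (hε : ε ∈ (K 1 : Ideal (MvPowerSeries τ ℂ))) (e : τ →₀ ℕ) :
    ∑ m ∈ Finset.Iic (Finsupp.equivFunOnFinite.symm fun _ => deg e),
        (m s : ℂ) * (MvPowerSeries.coeff m f *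
          MvPowerSeries.coeff e ((∏ s' : σ, a0 s' ^ ((m - Finsupp.single s 1 : σ →₀ ℕ) s')) * ε))
      = MvPowerSeries.coeff e (fsubst a0 (pd s f) * ε) := by
  classical
  set N := deg e with hN
  set T : Finset (σ →₀ ℕ) := Finset.Iic (Finsupp.equivFunOnFinite.symm fun _ => N) with hT
  -- rewrite the right-hand side as a single sum over T
  have hrhs : MvPowerSeries.coeff e (fsubst a0 (pd s f) * ε)
      = ∑ μ ∈ T, ((μ s : ℂ) + 1) * (MvPowerSeries.coeff (μ + Finsupp.single s 1) f *
          MvPowerSeries.coeff e ((∏ s' : σ, a0 s' ^ μ s') * ε)) := by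
    rw [MvPowerSeries.coeff_mul]
    have hcf : ∀ p ∈ Finset.HasAntidiagonal.antidiagonal e,
        MvPowerSeries.coeff p.1 (fsubst a0 (pd s f)) * MvPowerSeries.coeff p.2 ε
          = ∑ μ ∈ T, (MvPowerSeries.coeff μ (pd s f)
              * MvPowerSeries.coeff p.1 (∏ s' : σ, a0 s' ^ μ s')) * MvPowerSeries.coeff p.2 ε := by
      intro p hp
      rw [← Finset.sum_mul]
      congr 1
      refine coeff_fsubst a0 ha0 _ p.1 T ?_
      intro m hm
      rw [Finset.mem_Iic] at hm
      rw [hT, mem_T_iff]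
      intro t
      have h1 : m t ≤ deg p.1 := by
        have := Finsupp.le_def.mp hm t
        simpa [Finsupp.coe_equivFunOnFinite_symm] using this
      have h2 : deg p.1 ≤ N := by
        rw [Finset.HasAntidiagonal.mem_antidiagonal] at hp
        rw [hN, ← hp, deg_add]; omega
      omega
    rw [Finset.sum_congr rfl hcf, Finset.sum_comm]
    refine Finset.sum_congr rfl fun μ _ => ?_
    have : ∑ p ∈ Finset.HasAntidiagonal.antidiagonal e,
          (MvPowerSeries.coeff μ (pd s f) * MvPowerSeries.coeff p.1 (∏ s' : σ, a0 s' ^ μ s'))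
            * MvPowerSeries.coeff p.2 ε
        = MvPowerSeries.coeff μ (pd s f)
            * ∑ p ∈ Finset.HasAntidiagonal.antidiagonal e,
                MvPowerSeries.coeff p.1 (∏ s' : σ, a0 s' ^ μ s') * MvPowerSeries.coeff p.2 ε := by
      rw [Finset.mul_sum]
      exact Finset.sum_congr rfl fun p _ => by ring
    rw [this, ← MvPowerSeries.coeff_mul, coeff_pd, mul_assoc]
  rw [hrhs]
  -- restrict both sides to suitable filtered index sets
  have hmemT : ∀ {m : σ →₀ ℕ}, m ∈ T → ∀ t, m t ≤ N := fun hm => mem_T_iff.mp hm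
  have hlhs_filter :
      ∑ m ∈ T, (m s : ℂ) * (MvPowerSeries.coeff m f *
          MvPowerSeries.coeff e ((∏ s' : σ, a0 s' ^ ((m - Finsupp.single s 1 : σ →₀ ℕ) s')) * ε))
        = ∑ m ∈ T.filter (fun m => 1 ≤ m s), (m s : ℂ) * (MvPowerSeries.coeff m f *
            MvPowerSeries.coeff e ((∏ s' : σ, a0 s' ^ ((m - Finsupp.single s 1 : σ →₀ ℕ) s')) * ε)) := by
    refine (Finset.sum_subset (Finset.filter_subset _ _) fun m hm hnm => ?_).symm
    have : m s = 0 := by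
      by_contra hc
      exact hnm (Finset.mem_filter.mpr ⟨hm, by omega⟩)
    rw [this]; simp
  have hrhs_filter :
      ∑ μ ∈ T, ((μ s : ℂ) + 1) * (MvPowerSeries.coeff (μ + Finsupp.single s 1) f *
          MvPowerSeries.coeff e ((∏ s' : σ, a0 s' ^ μ s') * ε))
        = ∑ μ ∈ T.filter (fun μ => μ s < N), ((μ s : ℂ) + 1) *
            (MvPowerSeries.coeff (μ + Finsupp.single s 1) f *
              MvPowerSeries.coeff e ((∏ s' : σ, a0 s' ^ μ s') * ε)) := by
    refine (Finset.sum_subset (Finset.filter_subset _ _) fun μ hμ hnμ => ?_).symm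
    have hμs : μ s = N := by
      have := hmemT hμ s
      by_contra hc
      exact hnμ (Finset.mem_filter.mpr ⟨hμ, by omega⟩)
    have hdeg : N ≤ deg μ := hμs ▸ apply_le_deg μ s
    have hmem : (∏ s' : σ, a0 s' ^ μ s') * ε ∈ (K (deg μ + 1) : Ideal (MvPowerSeries τ ℂ)) :=
      K_mul_mem (prod_pow_mem_K a0 ha0 μ) hε
    rw [hmem e (by omega), mul_zero, mul_zero]
  rw [hlhs_filter, hrhs_filter]
  -- bijection m = μ + single s 1
  refine Finset.sum_nbij' (fun m => m - Finsupp.single s 1) (fun μ => μ + Finsupp.single s 1)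
    ?_ ?_ ?_ ?_ ?_
  · intro m hm
    obtain ⟨hmT, hms⟩ := Finset.mem_filter.mp hm
    refine Finset.mem_filter.mpr ⟨mem_T_iff.mpr fun t => ?_, ?_⟩
    · calc (m - Finsupp.single s 1 : σ →₀ ℕ) t ≤ m t := by
            rw [Finsupp.tsub_apply]; omega
        _ ≤ N := hmemT hmT t
    · have h1 : m s ≤ N := hmemT hmT s
      rw [Finsupp.tsub_apply, Finsupp.single_eq_same]
      omega
  · intro μ hμ
    obtain ⟨hμT, hμs⟩ := Finset.mem_filter.mp hμ
    refine Finset.mem_filter.mpr ⟨mem_T_iff.mpr fun t => ?_, ?_⟩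
    · rcases eq_or_ne t s with rfl | ht
      · rw [Finsupp.add_apply, Finsupp.single_eq_same]; omega
      · rw [Finsupp.add_apply, Finsupp.single_eq_of_ne' (Ne.symm ht), add_zero]
        exact hmemT hμT t
    · rw [Finsupp.add_apply, Finsupp.single_eq_same]; omega
  · intro m hm
    obtain ⟨_, hms⟩ := Finset.mem_filter.mp hm
    exact tsub_add_cancel_of_le (Finsupp.single_le_iff.mpr hms)
  · intro μ _
    exact add_tsub_cancel_right _ _
  · intro m hm
    obtain ⟨_, hms⟩ := Finset.mem_filter.mp hm
    have h1 : ((m - Finsupp.single s 1 : σ →₀ ℕ) s : ℂ) + 1 = (m s : ℂ) := by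
      rw [Finsupp.tsub_apply, Finsupp.single_eq_same]
      push_cast [Nat.sub_add_cancel hms]
      norm_cast
      omega
    have h2 : (m - Finsupp.single s 1 : σ →₀ ℕ) + Finsupp.single s 1 = m :=
      tsub_add_cancel_of_le (Finsupp.single_le_iff.mpr hms)
    rw [h1, h2]

lemma key_lemma [DecidableEq τ] (a a0 : σ → MvPowerSeries τ ℂ)
    (ha : ∀ s, MvPowerSeries.constantCoeff (a s) = 0)
    (ha0 : ∀ s, MvPowerSeries.constantCoeff (a0 s) = 0)
    {n : ℕ} (hn : 1 ≤ n)
    (hε : ∀ s, a s - a0 s ∈ (K n : Ideal (MvPowerSeries τ ℂ)))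
    (f : MvPowerSeries σ ℂ) :
    fsubst a f - fsubst a0 f - ∑ s : σ, fsubst a0 (pd s f) * (a s - a0 s)
      ∈ (K (2 * n) : Ideal (MvPowerSeries τ ℂ)) := by
  classical
  intro e he
  rw [map_sub, map_sub, map_sum]
  set T : Finset (σ →₀ ℕ) := Finset.Iic (Finsupp.equivFunOnFinite.symm fun _ => deg e) with hT
  rw [coeff_fsubst a ha f e T (subset_refl T), coeff_fsubst a0 ha0 f e T (subset_refl T)]
  have hbin : ∀ m ∈ T, MvPowerSeries.coeff m f * MvPowerSeries.coeff e (∏ s : σ, a s ^ m s)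
      = MvPowerSeries.coeff m f * MvPowerSeries.coeff e (∏ s : σ, a0 s ^ m s)
        + ∑ s : σ, (m s : ℂ) * (MvPowerSeries.coeff m f * MvPowerSeries.coeff e
            ((∏ s' : σ, a0 s' ^ ((m - Finsupp.single s 1 : σ →₀ ℕ) s')) * (a s - a0 s))) := by
    intro m _
    have hb := bin a a0 hε m e he
    rw [map_sub, map_sub, map_sum] at hb
    simp only [map_nsmul] at hb
    simp only [nsmul_eq_mul] at hb
    rw [sub_sub, sub_eq_zero] at hb
    rw [hb]
    rw [mul_add, Finset.mul_sum]
    congr 1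
    exact Finset.sum_congr rfl fun s _ => by ring
  rw [Finset.sum_congr rfl hbin, Finset.sum_add_distrib, Finset.sum_comm]
  have hmatch : ∀ s : σ,
      ∑ m ∈ T, (m s : ℂ) * (MvPowerSeries.coeff m f * MvPowerSeries.coeff e
          ((∏ s' : σ, a0 s' ^ ((m - Finsupp.single s 1 : σ →₀ ℕ) s')) * (a s - a0 s)))
        = MvPowerSeries.coeff e (fsubst a0 (pd s f) * (a s - a0 s)) :=
    fun s => match_lemma a0 ha0 f s (a s - a0 s) (K_mono hn (hε s)) e
  rw [Finset.sum_congr rfl fun s _ => hmatch s]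
  ring


lemma exists_min (f : MvPowerSeries τ ℂ) (hf : f ≠ 0) :
    ∃ d : ℕ, (∃ e, deg e = d ∧ MvPowerSeries.coeff e f ≠ 0)
      ∧ ∀ e, deg e < d → MvPowerSeries.coeff e f = 0 := by
  have hne : {N | ∃ e, deg e = N ∧ MvPowerSeries.coeff e f ≠ 0}.Nonempty := by
    have h1 : ∃ e, MvPowerSeries.coeff e f ≠ 0 := by
      by_contra hc
      push_neg at hc
      exact hf (MvPowerSeries.ext fun e => by rw [hc e, map_zero])
    obtain ⟨e, he⟩ := h1
    exact ⟨deg e, e, rfl, he⟩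
  refine ⟨sInf _, Nat.sInf_mem hne, fun e he => ?_⟩
  by_contra hc
  exact Nat.notMem_of_lt_sInf he ⟨e, rfl, hc⟩

lemma deg_eq_degree (m : τ →₀ ℕ) : deg m = m.degree := rfl

section MulMin

variable [Fintype τ] [DecidableEq τ]

/-- Homogeneous part of lowest degree, as a polynomial. -/
noncomputable def lowPart (f : MvPowerSeries τ ℂ) (d : ℕ) : MvPolynomial τ ℂ :=
  ∑ u ∈ (Finset.Iic (Finsupp.equivFunOnFinite.symm fun _ => d)).filter (fun u => deg u = d),
    MvPolynomial.monomial u (MvPowerSeries.coeff u f)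

lemma coeff_lowPart (f : MvPowerSeries τ ℂ) (d : ℕ) (u : τ →₀ ℕ) :
    (lowPart f d).coeff u = if deg u = d then MvPowerSeries.coeff u f else 0 := by
  rw [lowPart, MvPolynomial.coeff_sum]
  have h1 : ∀ u' ∈ (Finset.Iic (Finsupp.equivFunOnFinite.symm fun _ => d)).filter
        (fun u => deg u = d),
      MvPolynomial.coeff u (MvPolynomial.monomial u' (MvPowerSeries.coeff u' f))
        = if u' = u then MvPowerSeries.coeff u' f else 0 :=
    fun u' _ => MvPolynomial.coeff_monomial u u' _
  rw [Finset.sum_congr rfl h1, Finset.sum_ite_eq']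
  by_cases hu : deg u = d
  · rw [if_pos, if_pos hu]
    exact Finset.mem_filter.mpr ⟨mem_T_iff.mpr fun t => hu ▸ apply_le_deg u t, hu⟩
  · rw [if_neg, if_neg hu]
    intro hc
    exact hu (Finset.mem_filter.mp hc).2

lemma lowPart_isHomogeneous (f : MvPowerSeries τ ℂ) (d : ℕ) :
    (lowPart f d).IsHomogeneous d :=
  MvPolynomial.IsHomogeneous.sum _ _ _ fun u hu =>
    MvPolynomial.isHomogeneous_monomial _
      (by rw [← deg_eq_degree]; exact (Finset.mem_filter.mp hu).2)

lemma mul_min {f g : MvPowerSeries τ ℂ} {d n : ℕ}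
    (hf1 : ∃ e, deg e = d ∧ MvPowerSeries.coeff e f ≠ 0)
    (hf2 : ∀ e, deg e < d → MvPowerSeries.coeff e f = 0)
    (hg1 : ∃ e, deg e = n ∧ MvPowerSeries.coeff e g ≠ 0)
    (hg2 : ∀ e, deg e < n → MvPowerSeries.coeff e g = 0) :
    ∃ e, deg e = d + n ∧ MvPowerSeries.coeff e (f * g) ≠ 0 := by
  set P := lowPart f d with hP
  set Q := lowPart g n with hQ
  have hPne : P ≠ 0 := by
    obtain ⟨ef, hef, hcf⟩ := hf1
    exact MvPolynomial.ne_zero_iff.mpr ⟨ef, by rwa [hP, coeff_lowPart, if_pos hef]⟩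
  have hQne : Q ≠ 0 := by
    obtain ⟨eg, heg, hcg⟩ := hg1
    exact MvPolynomial.ne_zero_iff.mpr ⟨eg, by rwa [hQ, coeff_lowPart, if_pos heg]⟩
  obtain ⟨e0, he0⟩ := MvPolynomial.ne_zero_iff.mp (mul_ne_zero hPne hQne)
  have hhom := (lowPart_isHomogeneous f d).mul (lowPart_isHomogeneous g n)
  have hdeg : deg e0 = d + n := by
    by_contra hc
    exact he0 (hhom.coeff_eq_zero (by rwa [← deg_eq_degree]))
  refine ⟨e0, hdeg, ?_⟩
  have hcoeff : MvPowerSeries.coeff e0 (f * g) = (P * Q).coeff e0 := by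
    rw [MvPowerSeries.coeff_mul, MvPolynomial.coeff_mul]
    refine Finset.sum_congr rfl fun p hp => ?_
    rw [Finset.HasAntidiagonal.mem_antidiagonal] at hp
    have hsum : deg p.1 + deg p.2 = d + n := by rw [← deg_add, hp, hdeg]
    rcases lt_trichotomy (deg p.1) d with h | h | h
    · rw [hf2 p.1 h, coeff_lowPart, if_neg (by omega), zero_mul, zero_mul]
    · rw [coeff_lowPart, coeff_lowPart, if_pos h, if_pos (by omega)]
    · rw [hg2 p.2 (by omega), coeff_lowPart g, if_neg (by omega), mul_zero, mul_zero]
  rw [hcoeff]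
  exact he0

end MulMin

end FDaux


/-- Finite determination of formal solutions of a formal system with generically
nondegenerate Jacobian along a given solution: if `R(x, h⁰(x)) = 0` and the Jacobian
determinant `det(∂Rᵢ/∂yⱼ)(x, h⁰(x))` is a nonzero formal power series, then there is a
positive integer `k` such that any formal solution `h` of `R(x, h(x)) = 0` agreeing
with `h⁰` up to order `k` equals `h⁰`. -/
theorem finite_determination_of_formal_solutions {q r : ℕ}
    (R : Fin r → MvPowerSeries (Fin q ⊕ Fin r) ℂ)
    (h0 : Fin r → MvPowerSeries (Fin q) ℂ)
    (hh00 : ∀ i, MvPowerSeries.constantCoeff (h0 i) = 0)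
    (hsol0 : ∀ i, fsubst (Sum.elim MvPowerSeries.X h0) (R i) = 0)
    (hjac : Matrix.det
      (fun i j => fsubst (Sum.elim MvPowerSeries.X h0) (pd (Sum.inr j) (R i))) ≠ 0) :
    ∃ k : ℕ, 0 < k ∧ ∀ h : Fin r → MvPowerSeries (Fin q) ℂ,
      (∀ i, MvPowerSeries.constantCoeff (h i) = 0) →
      (∀ i, fsubst (Sum.elim MvPowerSeries.X h) (R i) = 0) →
      (∀ i (m : Fin q →₀ ℕ), (m.sum fun _ e => e) ≤ k →
        MvPowerSeries.coeff m (h i) = MvPowerSeries.coeff m (h0 i)) →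
      h = h0 := by
  classical
  open FDaux in
  set a0 : Fin q ⊕ Fin r → MvPowerSeries (Fin q) ℂ := Sum.elim MvPowerSeries.X h0 with ha0def
  have ha0 : ∀ s, MvPowerSeries.constantCoeff (a0 s) = 0 := by
    rintro (i | j)
    · exact MvPowerSeries.constantCoeff_X i
    · exact hh00 j
  set Jm : Matrix (Fin r) (Fin r) (MvPowerSeries (Fin q) ℂ) :=
    Matrix.of fun i j => fsubst a0 (pd (Sum.inr j) (R i)) with hJm
  have hJdet : Jm.det ≠ 0 := hjac
  obtain ⟨d, hd1, hd2⟩ := FDaux.exists_min Jm.det hJdet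
  refine ⟨d + 1, Nat.succ_pos d, fun h hh0 hsol hagree => ?_⟩
  by_contra hne
  -- the difference δ and its minimal order n
  set δ : Fin r → MvPowerSeries (Fin q) ℂ := fun j => h j - h0 j with hδ
  have hδne : ∃ i e, MvPowerSeries.coeff e (δ i) ≠ 0 := by
    have : ∃ i, h i ≠ h0 i := by
      by_contra hc; push_neg at hc; exact hne (funext hc)
    obtain ⟨i, hi⟩ := this
    have : δ i ≠ 0 := sub_ne_zero.mpr hi
    by_contra hc
    push_neg at hc
    exact this (MvPowerSeries.ext fun e => by rw [hc i e, map_zero])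
  set S : Set ℕ := {N | ∃ i e, FDaux.deg e = N ∧ MvPowerSeries.coeff e (δ i) ≠ 0} with hS
  have hSne : S.Nonempty := by
    obtain ⟨i, e, he⟩ := hδne
    exact ⟨FDaux.deg e, i, e, rfl, he⟩
  set n : ℕ := sInf S with hn
  obtain ⟨i0, e0, he0, hc0⟩ := Nat.sInf_mem hSne
  have hδcoeff : ∀ i e, FDaux.deg e ≤ d + 1 → MvPowerSeries.coeff e (δ i) = 0 := by
    intro i e he
    rw [hδ]
    simp only [map_sub]
    rw [hagree i e he, sub_self]
  have hnd : d + 1 < n := by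
    by_contra hc
    push_neg at hc
    exact hc0 (hδcoeff i0 e0 (by omega))
  have hδK : ∀ j, δ j ∈ (FDaux.K n : Ideal (MvPowerSeries (Fin q) ℂ)) := by
    intro j e he
    by_contra hc
    have hmem : FDaux.deg e ∈ S := ⟨j, e, rfl, hc⟩
    have hle := Nat.sInf_le hmem
    rw [← hn] at hle
    omega
  -- the key linearization
  set a : Fin q ⊕ Fin r → MvPowerSeries (Fin q) ℂ := Sum.elim MvPowerSeries.X h with hadef
  have ha : ∀ s, MvPowerSeries.constantCoeff (a s) = 0 := by
    rintro (i | j)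
    · exact MvPowerSeries.constantCoeff_X i
    · exact hh0 j
  have hεK : ∀ s, a s - a0 s ∈ (FDaux.K n : Ideal (MvPowerSeries (Fin q) ℂ)) := by
    rintro (i | j)
    · simpa [hadef, ha0def] using zero_mem _
    · exact hδK j
  have hG : ∀ i, (∑ j : Fin r, Jm i j * δ j)
      ∈ (FDaux.K (2 * n) : Ideal (MvPowerSeries (Fin q) ℂ)) := by
    intro i
    have hk := FDaux.key_lemma a a0 ha ha0 (by omega) hεK (R i)
    rw [hsol i, hsol0 i, sub_zero, zero_sub] at hk
    have := neg_mem hk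
    rw [neg_neg] at this
    have hsum : (∑ s : Fin q ⊕ Fin r, fsubst a0 (pd s (R i)) * (a s - a0 s))
        = ∑ j : Fin r, Jm i j * δ j := by
      rw [Fintype.sum_sum_type]
      have hzero : ∀ i' : Fin q, fsubst a0 (pd (Sum.inl i') (R i)) * (a (Sum.inl i') - a0 (Sum.inl i')) = 0 := by
        intro i'
        have : a (Sum.inl i') - a0 (Sum.inl i') = 0 := by simp [hadef, ha0def]
        rw [this, mul_zero]
      rw [Finset.sum_congr rfl fun i' _ => hzero i', Finset.sum_const_zero, zero_add]
      rfl
    rwa [hsum] at this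
  -- multiply by the adjugate
  have hdetδ : ∀ i, Jm.det * δ i ∈ (FDaux.K (2 * n) : Ideal (MvPowerSeries (Fin q) ℂ)) := by
    intro i
    have hmv : Jm.mulVec δ = fun i => ∑ j : Fin r, Jm i j * δ j := by
      funext i
      simp [Matrix.mulVec, dotProduct]
    have hsmul : Jm.det • δ = Jm.adjugate.mulVec (Jm.mulVec δ) := by
      rw [Matrix.mulVec_mulVec, Matrix.adjugate_mul, Matrix.smul_mulVec,
        Matrix.one_mulVec]
    have h1 : Jm.det * δ i = (Jm.adjugate.mulVec (Jm.mulVec δ)) i := by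
      rw [← hsmul]; simp
    rw [h1, hmv]
    have : Jm.adjugate.mulVec (fun i => ∑ j : Fin r, Jm i j * δ j) i
        = ∑ j : Fin r, Jm.adjugate i j * ∑ j' : Fin r, Jm j j' * δ j' := by
      simp [Matrix.mulVec, dotProduct]
    rw [this]
    exact Submodule.sum_mem _ fun j _ => Ideal.mul_mem_left _ _ (hG j)
  -- contradiction via lowest-degree parts
  have hδmin : ∀ e, FDaux.deg e < n → MvPowerSeries.coeff e (δ i0) = 0 := fun e he => hδK i0 e he
  obtain ⟨e1, he1, hc1⟩ := FDaux.mul_min hd1 hd2 ⟨e0, he0, hc0⟩ hδmin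
  exact hc1 (hdetδ i0 e1 (by omega))
end

section
/- Let $F : (\mathbb{C}^k_x,0) \to (\mathbb{C}^{k'}_{x'},0)$ and $G : (\mathbb{C}^{k'}_{x'},0) \to \mathbb{C}$ be formal power series maps with $G \neq 0$, and suppose the generic rank of $F$ is $k'$ (i.e., some $k' \times k'$ minor of $\partial F/\partial x$ is a nonzero formal power series). Then $G \circ F \neq 0$ in $\mathbb{C}[[x]]$. -/
set_option linter.unusedSectionVars false


open MvPowerSeries

namespace Aux

/-- total degree of a multi-index -/
def d {τ : Type*} (m : τ →₀ ℕ) : ℕ := m.sum fun _ x => x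

lemma d_add {τ : Type*} (u v : τ →₀ ℕ) : d (u + v) = d u + d v :=
  Finsupp.sum_add_index' (fun _ => rfl) (fun _ _ _ => rfl)

lemma d_single {τ : Type*} (s : τ) (n : ℕ) : d (Finsupp.single s n) = n :=
  Finsupp.sum_single_index rfl

lemma apply_le_d {τ : Type*} (m : τ →₀ ℕ) (s : τ) : m s ≤ d m := by
  by_cases h : s ∈ m.support
  · exact Finset.single_le_sum (f := fun t => m t) (fun _ _ => Nat.zero_le _) h
  · simp [Finsupp.notMem_support_iff.mp h]

lemma d_eq_zero_iff {τ : Type*} (m : τ →₀ ℕ) : d m = 0 ↔ m = 0 := by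
  constructor
  · intro h
    ext s
    have := apply_le_d m s
    simp only [Finsupp.coe_zero, Pi.zero_apply]
    omega
  · rintro rfl; rfl

lemma d_le_of_le {τ : Type*} {u v : τ →₀ ℕ} (h : u ≤ v) : d u ≤ d v := by
  obtain ⟨w, rfl⟩ := le_iff_exists_add.mp h
  rw [d_add]; omega


variable {σ τ : Type*} [Fintype σ] [DecidableEq σ]

/-- `Ord n f` : the order of `f` is at least `n`. -/
def Ord (n : ℕ) (f : MvPowerSeries τ ℂ) : Prop :=
  ∀ e : τ →₀ ℕ, d e < n → MvPowerSeries.coeff e f = 0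

lemma ord_one {f : MvPowerSeries τ ℂ} (hf : MvPowerSeries.constantCoeff f = 0) :
    Ord 1 f := by
  intro e he
  have : e = 0 := (d_eq_zero_iff e).mp (by omega)
  subst this
  exact hf

lemma ord_mul [DecidableEq τ] {n p : ℕ} {f g : MvPowerSeries τ ℂ} (hf : Ord n f)
    (hg : Ord p g) : Ord (n + p) (f * g) := by
  intro e he
  rw [MvPowerSeries.coeff_mul]
  apply Finset.sum_eq_zero
  rintro ⟨u, v⟩ huv
  have h1 : u + v = e := Finset.HasAntidiagonal.mem_antidiagonal.mp huv
  have h2 : d u + d v = d e := by rw [← d_add, h1]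
  rcases lt_or_ge (d u) n with h | h
  · simp [hf u h]
  · simp [hg v (by omega)]

lemma ord_pow [DecidableEq τ] {f : MvPowerSeries τ ℂ}
    (hf : MvPowerSeries.constantCoeff f = 0) (n : ℕ) : Ord n (f ^ n) := by
  induction n with
  | zero => intro e he; omega
  | succ n ih =>
    rw [pow_succ]
    exact ord_mul ih (ord_one hf)

lemma ord_prod [DecidableEq τ] {a : σ → MvPowerSeries τ ℂ}
    (ha : ∀ s, MvPowerSeries.constantCoeff (a s) = 0) (m : σ →₀ ℕ) :
    Ord (∑ s : σ, m s) (∏ s : σ, a s ^ m s) := by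
  classical
  induction (Finset.univ : Finset σ) using Finset.cons_induction with
  | empty => intro e he; simp at he
  | cons s T hs ih =>
    rw [Finset.sum_cons, Finset.prod_cons]
    exact ord_mul (ord_pow (ha s) (m s)) ih

lemma d_eq_sum (m : σ →₀ ℕ) : d m = ∑ s : σ, m s :=
  Finsupp.sum_fintype _ _ (fun _ => rfl)

lemma coeff_prod_pow_zero [DecidableEq τ] {a : σ → MvPowerSeries τ ℂ}
    (ha : ∀ s, MvPowerSeries.constantCoeff (a s) = 0) {m : σ →₀ ℕ} {e : τ →₀ ℕ}
    (h : d e < d m) : MvPowerSeries.coeff e (∏ s : σ, a s ^ m s) = 0 :=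
  ord_prod ha m e (by rwa [← d_eq_sum])


/-- The bound index used in the definition of `fsubst`. -/
noncomputable def EN (N : ℕ) : σ →₀ ℕ := Finsupp.equivFunOnFinite.symm fun _ => N

lemma mem_Iic_EN {m : σ →₀ ℕ} {N : ℕ} (h : d m ≤ N) : m ∈ Finset.Iic (EN N : σ →₀ ℕ) := by
  rw [Finset.mem_Iic]
  intro s
  exact le_trans (apply_le_d m s) h

lemma coeff_fsubst (a : σ → MvPowerSeries τ ℂ) (f : MvPowerSeries σ ℂ) (e : τ →₀ ℕ) :
    MvPowerSeries.coeff e (fsubst a f) =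
      ∑ m ∈ Finset.Iic (EN (d e) : σ →₀ ℕ),
        MvPowerSeries.coeff m f * MvPowerSeries.coeff e (∏ s : σ, a s ^ m s) := by
  rw [MvPowerSeries.coeff_apply]
  show MvPowerSeries.coeff e _ = _
  rw [map_sum]
  exact Finset.sum_congr rfl fun m _ => MvPowerSeries.coeff_smul _ _ _

/-- the key coefficient formula, with any sufficiently large bound. -/
lemma coeff_fsubst' [DecidableEq τ] {a : σ → MvPowerSeries τ ℂ}
    (ha : ∀ s, MvPowerSeries.constantCoeff (a s) = 0)
    (f : MvPowerSeries σ ℂ) {e : τ →₀ ℕ} {N : ℕ} (hN : d e ≤ N) :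
    MvPowerSeries.coeff e (fsubst a f) =
      ∑ m ∈ Finset.Iic (EN N : σ →₀ ℕ),
        MvPowerSeries.coeff m f * MvPowerSeries.coeff e (∏ s : σ, a s ^ m s) := by
  rw [coeff_fsubst]
  have key : ∀ (M : ℕ), d e ≤ M →
      ∑ m ∈ Finset.Iic (EN M : σ →₀ ℕ),
        MvPowerSeries.coeff m f * MvPowerSeries.coeff e (∏ s : σ, a s ^ m s) =
      ∑ m ∈ Finset.Iic (EN M : σ →₀ ℕ) with d m ≤ d e,
        MvPowerSeries.coeff m f * MvPowerSeries.coeff e (∏ s : σ, a s ^ m s) := by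
    intro M hM
    rw [Finset.sum_filter]
    apply Finset.sum_congr rfl
    intro m _
    by_cases h : d m ≤ d e
    · rw [if_pos h]
    · rw [if_neg h, coeff_prod_pow_zero ha (show d e < d m by omega), mul_zero]
  rw [key _ le_rfl, key _ hN]
  apply Finset.sum_congr _ (fun _ _ => rfl)
  apply Finset.ext
  intro m
  simp only [Finset.mem_filter]
  constructor
  · rintro ⟨_, h2⟩; exact ⟨mem_Iic_EN (le_trans h2 hN), h2⟩
  · rintro ⟨_, h2⟩; exact ⟨mem_Iic_EN (le_trans h2 le_rfl), h2⟩

lemma coeff_fsubst_congr [DecidableEq τ] {a : σ → MvPowerSeries τ ℂ}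
    (ha : ∀ s, MvPowerSeries.constantCoeff (a s) = 0)
    {f g : MvPowerSeries σ ℂ} {N : ℕ}
    (hfg : ∀ m : σ →₀ ℕ, d m ≤ N → MvPowerSeries.coeff m f = MvPowerSeries.coeff m g)
    {e : τ →₀ ℕ} (he : d e ≤ N) :
    MvPowerSeries.coeff e (fsubst a f) = MvPowerSeries.coeff e (fsubst a g) := by
  rw [coeff_fsubst' ha f he, coeff_fsubst' ha g he]
  apply Finset.sum_congr rfl
  intro m _
  by_cases h : d m ≤ N
  · rw [hfg m h]
  · rw [coeff_prod_pow_zero ha (by omega), mul_zero, mul_zero]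

lemma fsubst_zero (a : σ → MvPowerSeries τ ℂ) : fsubst a (0 : MvPowerSeries σ ℂ) = 0 := by
  ext e
  rw [coeff_fsubst]
  simp

lemma fsubst_sum {ι : Type*} (a : σ → MvPowerSeries τ ℂ) (T : Finset ι)
    (f : ι → MvPowerSeries σ ℂ) :
    fsubst a (∑ i ∈ T, f i) = ∑ i ∈ T, fsubst a (f i) := by
  ext e
  rw [coeff_fsubst, map_sum]
  simp only [map_sum, Finset.sum_mul]
  rw [Finset.sum_comm]
  apply Finset.sum_congr rfl
  intro i _
  rw [coeff_fsubst]

lemma fsubst_monomial [DecidableEq τ] {a : σ → MvPowerSeries τ ℂ}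
    (ha : ∀ s, MvPowerSeries.constantCoeff (a s) = 0) (m : σ →₀ ℕ) (c : ℂ) :
    fsubst a (MvPowerSeries.monomial m c) = c • ∏ s : σ, a s ^ m s := by
  ext e
  rw [coeff_fsubst, MvPowerSeries.coeff_smul]
  by_cases hm : m ∈ Finset.Iic (EN (d e) : σ →₀ ℕ)
  · rw [Finset.sum_eq_single m]
    · rw [MvPowerSeries.coeff_monomial_same]
    · intro b _ hb
      rw [MvPowerSeries.coeff_monomial, if_neg hb, zero_mul]
    · intro h; exact absurd hm h
  · rw [Finset.sum_eq_zero, coeff_prod_pow_zero ha, mul_zero]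
    · by_contra h
      push_neg at h
      exact hm (mem_Iic_EN h)
    · intro b hb
      rw [MvPowerSeries.coeff_monomial, if_neg, zero_mul]
      rintro rfl; exact hm hb


lemma coeff_pd {τ : Type*} (s : τ) (f : MvPowerSeries τ ℂ) (m : τ →₀ ℕ) :
    MvPowerSeries.coeff m (pd s f) =
      ((m s : ℂ) + 1) * MvPowerSeries.coeff (m + Finsupp.single s 1) f := rfl

lemma pd_add {τ : Type*} (s : τ) (f g : MvPowerSeries τ ℂ) :
    pd s (f + g) = pd s f + pd s g := by
  ext m
  simp only [coeff_pd, map_add]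
  ring

lemma pd_zero {τ : Type*} (s : τ) : pd s (0 : MvPowerSeries τ ℂ) = 0 := by
  ext m
  simp [coeff_pd]

lemma pd_smul {τ : Type*} (s : τ) (c : ℂ) (f : MvPowerSeries τ ℂ) :
    pd s (c • f) = c • pd s f := by
  ext m
  simp only [coeff_pd, MvPowerSeries.coeff_smul]
  ring

lemma pd_sum {τ ι : Type*} (s : τ) (T : Finset ι) (f : ι → MvPowerSeries τ ℂ) :
    pd s (∑ i ∈ T, f i) = ∑ i ∈ T, pd s (f i) := by
  ext m
  simp only [coeff_pd, map_sum, Finset.mul_sum]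

lemma pd_one {τ : Type*} [DecidableEq τ] (s : τ) : pd s (1 : MvPowerSeries τ ℂ) = 0 := by
  ext m
  rw [coeff_pd]
  rw [MvPowerSeries.coeff_one, if_neg, mul_zero, map_zero]
  intro h
  have := congrArg (fun ν : τ →₀ ℕ => ν s) h
  simp [Finsupp.single_apply] at this

/-- swap the antidiagonal sum. -/
lemma sum_swap' {τ : Type*} [DecidableEq τ] (n : τ →₀ ℕ) (f : (τ →₀ ℕ) → (τ →₀ ℕ) → ℂ) :
    ∑ p ∈ Finset.HasAntidiagonal.antidiagonal n, f p.1 p.2 = ∑ p ∈ Finset.HasAntidiagonal.antidiagonal n, f p.2 p.1 := by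
  apply Finset.sum_nbij' (i := Prod.swap) (j := Prod.swap) <;>
    simp [Finset.HasAntidiagonal.mem_antidiagonal, add_comm]

/-- reindexing lemma for the Leibniz rule. -/
lemma sum_shift {τ : Type*} [DecidableEq τ] (j : τ) (m : τ →₀ ℕ)
    (φ : (τ →₀ ℕ) → (τ →₀ ℕ) → ℂ) :
    ∑ p ∈ Finset.HasAntidiagonal.antidiagonal (m + Finsupp.single j 1 : Finsupp τ ℕ), (p.1 j : ℂ) * φ p.1 p.2 =
      ∑ q ∈ Finset.HasAntidiagonal.antidiagonal m, ((q.1 j : ℂ) + 1) * φ (q.1 + Finsupp.single j 1) q.2 := by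
  classical
  set ε : τ →₀ ℕ := Finsupp.single j 1 with hε
  set T : Finset ((τ →₀ ℕ) × (τ →₀ ℕ)) :=
    (Finset.HasAntidiagonal.antidiagonal m).image (fun q => (q.1 + ε, q.2)) with hT
  have himg : T ⊆ Finset.HasAntidiagonal.antidiagonal (m + ε) := by
    intro p hp
    rw [hT, Finset.mem_image] at hp
    obtain ⟨q, hq, rfl⟩ := hp
    rw [Finset.HasAntidiagonal.mem_antidiagonal] at hq ⊢
    rw [← hq]
    exact add_right_comm q.1 ε q.2
  have hvanish : ∀ p ∈ Finset.HasAntidiagonal.antidiagonal (m + ε), p ∉ T → (p.1 j : ℂ) * φ p.1 p.2 = 0 := by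
    rintro ⟨u, v⟩ hp hnot
    rw [Finset.HasAntidiagonal.mem_antidiagonal] at hp
    by_cases h0 : u j = 0
    · rw [h0, Nat.cast_zero, zero_mul]
    · exfalso
      apply hnot
      rw [hT, Finset.mem_image]
      refine ⟨(u - ε, v), ?_, ?_⟩
      · rw [Finset.HasAntidiagonal.mem_antidiagonal]
        have hle : ε ≤ u := by
          rw [hε, Finsupp.single_le_iff]; omega
        show u - ε + v = m
        rw [tsub_add_eq_add_tsub hle, hp, add_tsub_cancel_right]
      · have hle : ε ≤ u := by
          rw [hε, Finsupp.single_le_iff]; omega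
        show (u - ε + ε, v) = (u, v)
        rw [tsub_add_cancel_of_le hle]
  have hinj : ∀ q1 ∈ Finset.HasAntidiagonal.antidiagonal m, ∀ q2 ∈ Finset.HasAntidiagonal.antidiagonal m,
      (fun q : (τ →₀ ℕ) × (τ →₀ ℕ) => (q.1 + ε, q.2)) q1 =
      (fun q : (τ →₀ ℕ) × (τ →₀ ℕ) => (q.1 + ε, q.2)) q2 → q1 = q2 := by
    rintro ⟨u1, v1⟩ _ ⟨u2, v2⟩ _ h
    simp only [Prod.mk.injEq] at h
    obtain ⟨h1, h2⟩ := h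
    have : u1 = u2 := add_right_cancel h1
    rw [this, h2]
  rw [← Finset.sum_subset himg hvanish, Finset.sum_image hinj]
  apply Finset.sum_congr rfl
  rintro ⟨u, v⟩ _
  have : ((u + ε : τ →₀ ℕ) j : ℂ) = (u j : ℂ) + 1 := by
    rw [Finsupp.add_apply, hε, Finsupp.single_eq_same]
    push_cast
    ring
  rw [this]

/-- Leibniz rule. -/
lemma pd_mul {τ : Type*} [DecidableEq τ] (j : τ) (f g : MvPowerSeries τ ℂ) :
    pd j (f * g) = pd j f * g + f * pd j g := by
  ext m
  rw [map_add, coeff_pd, MvPowerSeries.coeff_mul, MvPowerSeries.coeff_mul,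
    MvPowerSeries.coeff_mul, Finset.mul_sum]
  have key : ∀ p ∈ Finset.HasAntidiagonal.antidiagonal (m + Finsupp.single j 1),
      ((m j : ℂ) + 1) * (MvPowerSeries.coeff p.1 f * MvPowerSeries.coeff p.2 g) =
      (p.1 j : ℂ) * (MvPowerSeries.coeff p.1 f * MvPowerSeries.coeff p.2 g) +
      (p.2 j : ℂ) * (MvPowerSeries.coeff p.1 f * MvPowerSeries.coeff p.2 g) := by
    rintro ⟨u, v⟩ hm
    rw [Finset.HasAntidiagonal.mem_antidiagonal] at hm
    have h0 : u j + v j = m j + 1 := by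
      have := congrArg (fun ν : τ →₀ ℕ => ν j) hm
      simpa [Finsupp.add_apply, Finsupp.single_eq_same] using this
    have h1 : (u j : ℂ) + v j = (m j : ℂ) + 1 := by exact_mod_cast h0
    rw [← h1]
    ring
  rw [Finset.sum_congr rfl key, Finset.sum_add_distrib]
  congr 1
  · rw [sum_shift j m (fun u v => MvPowerSeries.coeff u f * MvPowerSeries.coeff v g)]
    apply Finset.sum_congr rfl
    rintro ⟨u, v⟩ _
    rw [coeff_pd]
    ring
  · rw [sum_swap' (m + Finsupp.single j 1)
      (fun u v => (v j : ℂ) * (MvPowerSeries.coeff u f * MvPowerSeries.coeff v g)),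
      sum_shift j m (fun u v => MvPowerSeries.coeff v f * MvPowerSeries.coeff u g),
      sum_swap' m
      (fun u v => ((u j : ℂ) + 1) *
        (MvPowerSeries.coeff v f * MvPowerSeries.coeff (u + Finsupp.single j 1) g))]
    apply Finset.sum_congr rfl
    rintro ⟨u, v⟩ _
    rw [coeff_pd]
    ring


lemma pd_pow {τ : Type*} [DecidableEq τ] (j : τ) (f : MvPowerSeries τ ℂ) (n : ℕ) :
    pd j (f ^ (n + 1)) = (n + 1 : ℂ) • (f ^ n * pd j f) := by
  induction n with
  | zero => simp [pow_one, pow_zero, one_mul, one_smul]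
  | succ n ih =>
    rw [pow_succ, pd_mul, ih, pow_succ]
    simp only [MvPowerSeries.smul_eq_C_mul]
    push_cast
    simp only [map_add, map_one, map_natCast]
    ring

lemma pd_prod {τ ι : Type*} [DecidableEq τ] [DecidableEq ι] (j : τ) (T : Finset ι)
    (g : ι → MvPowerSeries τ ℂ) :
    pd j (∏ i ∈ T, g i) = ∑ i ∈ T, (∏ t ∈ T.erase i, g t) * pd j (g i) := by
  induction T using Finset.induction_on with
  | empty => simp [pd_one]
  | insert s T hs ih =>
    rw [Finset.prod_insert hs, pd_mul, ih, Finset.sum_insert hs, Finset.mul_sum]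
    rw [Finset.erase_insert hs]
    congr 1
    · ring
    · apply Finset.sum_congr rfl
      intro i hi
      rw [Finset.erase_insert_of_ne (by rintro rfl; exact hs hi)]
      rw [Finset.prod_insert (fun h => hs (Finset.erase_subset _ _ h))]
      ring


lemma pd_monomial {τ : Type*} [DecidableEq τ] (i : τ) (m : τ →₀ ℕ) (c : ℂ) :
    pd i (MvPowerSeries.monomial m c) =
      MvPowerSeries.monomial (m - Finsupp.single i 1) ((m i : ℂ) * c) := by
  ext μ
  rw [coeff_pd, MvPowerSeries.coeff_monomial, MvPowerSeries.coeff_monomial]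
  by_cases hμ : μ + Finsupp.single i 1 = m
  · rw [if_pos hμ]
    have hmi : m i = μ i + 1 := by
      rw [← hμ, Finsupp.add_apply, Finsupp.single_eq_same]
    have : μ = m - Finsupp.single i 1 := by
      rw [← hμ, add_tsub_cancel_right]
    rw [if_pos this, hmi]
    push_cast
    ring
  · rw [if_neg hμ, mul_zero]
    by_cases hμ2 : μ = m - Finsupp.single i 1
    · rw [if_pos hμ2]
      have hmi : m i = 0 := by
        by_contra h
        apply hμ
        have hle : Finsupp.single i 1 ≤ m := by
          rw [Finsupp.single_le_iff]; omega
        rw [hμ2, tsub_add_cancel_of_le hle]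
      rw [hmi]
      push_cast
      ring
    · rw [if_neg hμ2]

variable {σ τ : Type*} [Fintype σ] [DecidableEq σ]

/-- chain rule for a monomial. -/
lemma chain_monomial [DecidableEq τ] {a : σ → MvPowerSeries τ ℂ}
    (ha : ∀ s, MvPowerSeries.constantCoeff (a s) = 0) (j : τ) (m : σ →₀ ℕ) (c : ℂ) :
    pd j (fsubst a (MvPowerSeries.monomial m c)) =
      ∑ i : σ, fsubst a (pd i (MvPowerSeries.monomial m c)) * pd j (a i) := by
  rw [fsubst_monomial ha, pd_smul, pd_prod]
  rw [Finset.smul_sum]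
  apply Finset.sum_congr rfl
  intro i _
  rw [pd_monomial, fsubst_monomial ha]
  by_cases hmi : ∃ n, m i = n + 1
  · obtain ⟨n, hn⟩ := hmi
    rw [hn, pd_pow]
    have hprod : ∏ s : σ, a s ^ (m - Finsupp.single i 1 : σ →₀ ℕ) s =
        (∏ t ∈ Finset.univ.erase i, a t ^ m t) * a i ^ n := by
      rw [← Finset.mul_prod_erase Finset.univ _ (Finset.mem_univ i)]
      have h1 : (m - Finsupp.single i 1 : σ →₀ ℕ) i = n := by
        rw [Finsupp.tsub_apply, Finsupp.single_eq_same, hn]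
        omega
      rw [h1, mul_comm]
      congr 1
      apply Finset.prod_congr rfl
      intro t ht
      have : (m - Finsupp.single i 1 : σ →₀ ℕ) t = m t := by
        rw [Finsupp.tsub_apply, Finsupp.single_eq_of_ne
          (fun h => (Finset.mem_erase.mp ht).1 h), Nat.sub_zero]
      rw [this]
    rw [hprod]
    simp only [MvPowerSeries.smul_eq_C_mul]
    push_cast
    simp only [map_add, map_one, map_mul, map_natCast]
    ring
  · push_neg at hmi
    have h0 : m i = 0 := by
      by_contra h
      exact hmi (m i - 1) (by omega)
    rw [h0, pow_zero, pd_one]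
    simp


/-- general chain rule. -/
lemma chain_rule [DecidableEq τ] {a : σ → MvPowerSeries τ ℂ}
    (ha : ∀ s, MvPowerSeries.constantCoeff (a s) = 0) (G : MvPowerSeries σ ℂ) (j : τ) :
    pd j (fsubst a G) = ∑ i : σ, fsubst a (pd i G) * pd j (a i) := by
  ext e
  set N : ℕ := d e + 1 with hN
  set Gt : MvPowerSeries σ ℂ := ∑ m ∈ Finset.Iic (EN N : σ →₀ ℕ),
    MvPowerSeries.monomial m (MvPowerSeries.coeff m G) with hGt
  have ht : ∀ μ : σ →₀ ℕ, d μ ≤ N →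
      MvPowerSeries.coeff μ Gt = MvPowerSeries.coeff μ G := by
    intro μ hμ
    rw [hGt, map_sum, Finset.sum_eq_single μ]
    · rw [MvPowerSeries.coeff_monomial_same]
    · intro b _ hb
      rw [MvPowerSeries.coeff_monomial, if_neg (Ne.symm hb)]
    · intro h
      exact absurd (mem_Iic_EN hμ) h
  have hL : MvPowerSeries.coeff e (pd j (fsubst a G)) =
      MvPowerSeries.coeff e (pd j (fsubst a Gt)) := by
    rw [coeff_pd, coeff_pd]
    congr 1
    apply coeff_fsubst_congr ha (N := N)
    · intro m hm
      exact (ht m hm).symm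
    · rw [d_add, d_single, hN]
  have hR : ∀ i, MvPowerSeries.coeff e (fsubst a (pd i G) * pd j (a i)) =
      MvPowerSeries.coeff e (fsubst a (pd i Gt) * pd j (a i)) := by
    intro i
    rw [MvPowerSeries.coeff_mul, MvPowerSeries.coeff_mul]
    apply Finset.sum_congr rfl
    rintro ⟨u, v⟩ huv
    rw [Finset.HasAntidiagonal.mem_antidiagonal] at huv
    have hdu : d u ≤ d e := by
      rw [← show u + v = e from huv, d_add]; omega
    congr 1
    apply coeff_fsubst_congr ha (N := d u) _ le_rfl
    intro μ hμ
    rw [coeff_pd, coeff_pd]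
    congr 1
    apply (ht _ _).symm
    rw [d_add, d_single]
    omega
  rw [hL, map_sum, Finset.sum_congr rfl (fun i _ => hR i), ← map_sum]
  congr 1
  rw [hGt, fsubst_sum, pd_sum, Finset.sum_congr rfl
    (fun m _ => chain_monomial ha j m (MvPowerSeries.coeff m G)), Finset.sum_comm]
  apply Finset.sum_congr rfl
  intro i _
  rw [pd_sum, fsubst_sum, Finset.sum_mul]

lemma constantCoeff_fsubst [DecidableEq τ] {a : σ → MvPowerSeries τ ℂ}
    (ha : ∀ s, MvPowerSeries.constantCoeff (a s) = 0) (f : MvPowerSeries σ ℂ) :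
    MvPowerSeries.coeff (0 : τ →₀ ℕ) (fsubst a f) = MvPowerSeries.coeff (0 : σ →₀ ℕ) f := by
  rw [coeff_fsubst]
  have hd0 : d (0 : τ →₀ ℕ) = 0 := Finsupp.sum_zero_index
  rw [Finset.sum_eq_single (0 : σ →₀ ℕ)]
  · have : ∏ s : σ, a s ^ (0 : σ →₀ ℕ) s = 1 := by
      apply Finset.prod_eq_one
      intro s _
      rw [Finsupp.coe_zero, Pi.zero_apply, pow_zero]
    rw [this]
    have h1 : MvPowerSeries.coeff (0 : τ →₀ ℕ) (1 : MvPowerSeries τ ℂ) = 1 := by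
      rw [MvPowerSeries.coeff_one, if_pos rfl]
    rw [h1, mul_one]
  · intro b _ hb
    rw [coeff_prod_pow_zero ha, mul_zero]
    rw [hd0]
    have : d b ≠ 0 := fun h => hb ((d_eq_zero_iff b).mp h)
    omega
  · intro h
    exact absurd (mem_Iic_EN (le_of_eq (Finsupp.sum_zero_index))) h

end Aux

open Aux in
/-- A formal map `F : (ℂᵏ,0) → (ℂᵏ',0)` of full generic rank `k'` (some `k' × k'`
minor of its Jacobian is a nonzero formal power series) pulls back nonzero formal power
series to nonzero formal power series: if `G ≠ 0` then `G ∘ F ≠ 0`. -/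
theorem comp_ne_zero_of_generic_rank_full {k k' : ℕ}
    (F : Fin k' → MvPowerSeries (Fin k) ℂ)
    (hF0 : ∀ i, MvPowerSeries.constantCoeff (F i) = 0)
    (hrk : ∃ cols : Fin k' ↪ Fin k,
      Matrix.det (fun i j => pd (cols j) (F i)) ≠ 0)
    (G : MvPowerSeries (Fin k') ℂ) (hG : G ≠ 0) :
    fsubst F G ≠ 0 := by
  intro hzero
  apply hG
  obtain ⟨cols, hdet⟩ := hrk
  set A : Matrix (Fin k') (Fin k') (MvPowerSeries (Fin k) ℂ) :=
    Matrix.of fun i j => pd (cols j) (F i) with hA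
  have key : ∀ H : MvPowerSeries (Fin k') ℂ, fsubst F H = 0 →
      ∀ i, fsubst F (pd i H) = 0 := by
    intro H hH
    have hchain : ∀ j : Fin k, ∑ i : Fin k', fsubst F (pd i H) * pd j (F i) = 0 := by
      intro j
      rw [← chain_rule hF0 H j, hH, pd_zero]
    set v : Fin k' → MvPowerSeries (Fin k) ℂ := fun i => fsubst F (pd i H) with hv
    have hvA : Matrix.vecMul v A = 0 := by
      funext j
      have := hchain (cols j)
      simpa [Matrix.vecMul, dotProduct, hA, hv] using this
    have h1 : Matrix.vecMul v (A * A.adjugate) = 0 := by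
      rw [← Matrix.vecMul_vecMul, hvA, Matrix.zero_vecMul]
    rw [Matrix.mul_adjugate] at h1
    have h2 : ∀ i0, A.det * v i0 = 0 := by
      intro i0
      have h3 := congrFun h1 i0
      simp only [Matrix.vecMul, dotProduct, Matrix.smul_apply, Matrix.one_apply,
        Pi.zero_apply, smul_eq_mul, mul_ite, mul_one, mul_zero] at h3
      rw [Finset.sum_ite_eq' Finset.univ i0 (fun i => v i * A.det)] at h3
      rw [if_pos (Finset.mem_univ i0)] at h3
      rw [mul_comm]
      exact h3
    intro i
    have h4 := h2 i
    rcases mul_eq_zero.mp h4 with h | h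
    · exact absurd h hdet
    · exact h
  have main : ∀ n : ℕ, ∀ ν : Fin k' →₀ ℕ, d ν ≤ n → ∀ H : MvPowerSeries (Fin k') ℂ,
      fsubst F H = 0 → MvPowerSeries.coeff ν H = 0 := by
    intro n
    induction n with
    | zero =>
      intro ν hν H hH
      have : ν = 0 := (d_eq_zero_iff ν).mp (by omega)
      subst this
      rw [← constantCoeff_fsubst hF0 H, hH, map_zero]
    | succ n ih =>
      intro ν hν H hH
      by_cases h : d ν ≤ n
      · exact ih ν h H hH
      · have hd : d ν = n + 1 := by omega
        obtain ⟨i, hi⟩ : ∃ i, ν i ≠ 0 := by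
          by_contra hc
          push_neg at hc
          have : ν = 0 := Finsupp.ext fun s => hc s
          rw [this] at hd
          rw [show d (0 : Fin k' →₀ ℕ) = 0 from Finsupp.sum_zero_index] at hd
          omega
        set ν' : Fin k' →₀ ℕ := ν - Finsupp.single i 1 with hν'
        have hle : Finsupp.single i 1 ≤ ν := by
          rw [Finsupp.single_le_iff]; omega
        have hsum : ν' + Finsupp.single i 1 = ν := tsub_add_cancel_of_le hle
        have hd' : d ν' ≤ n := by
          have hda := d_add ν' (Finsupp.single i 1)
          rw [hsum, d_single] at hda
          omega
        have h0 := ih ν' hd' (pd i H) (key H hH i)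
        rw [coeff_pd, hsum] at h0
        have hne : ((ν' i : ℂ) + 1) ≠ 0 := Nat.cast_add_one_ne_zero (ν' i)
        exact (mul_eq_zero.mp h0).resolve_left hne
  apply MvPowerSeries.ext
  intro ν
  rw [map_zero]
  exact main (d ν) ν le_rfl G hzero
end
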